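/- arXiv:0906.1672 — 5 statements merged into one kernel-verified Lean document; each statement's English description precedes it below -/
import Mathlib

section
/- The number of k-Stirling permutations of size n equals the product ∏_{i=1}^{n-1}(k·i+1). -/
/-- A `k`-Stirling permutation of size `n`, encoded as a word (list) over `{1,…,n}`:
length `k*n`, each letter `1,…,n` occurs exactly `k` times, and any letter occurring
strictly between two occurrences of a letter `i` is `≥ i`. -/
def IsStirlingWord (k n : ℕ) (w : List ℕ) : Prop :=
  w.length = k * n ∧
  (∀ i, 1 ≤ i → i ≤ n → w.count i = k) ∧
  (∀ p q r, p < q → q < r → r < w.length →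
    w.getD p 0 = w.getD r 0 → w.getD p 0 ≤ w.getD q 0)

namespace StirlingAux

lemma getD_left (a b c : List ℕ) {j : ℕ} (h1 : j < a.length) :
    (a ++ c ++ b).getD j 0 = (a ++ b).getD j 0 := by
  rw [List.append_assoc, List.getD_append _ _ 0 j h1, List.getD_append _ _ 0 j h1]

lemma getD_mid (a b c : List ℕ) {j : ℕ} (h1 : a.length ≤ j) (h2 : j < a.length + c.length) :
    (a ++ c ++ b).getD j 0 = c.getD (j - a.length) 0 := by
  rw [List.append_assoc, List.getD_append_right a (c ++ b) 0 j h1,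
    List.getD_append c b 0 _ (by omega)]

lemma getD_right (a b c : List ℕ) {j : ℕ} (h1 : a.length + c.length ≤ j) :
    (a ++ c ++ b).getD j 0 = (a ++ b).getD (j - c.length) 0 := by
  rcases Nat.lt_or_ge (j - c.length) (a.length + b.length) with hj | hj
  · rw [List.append_assoc, List.getD_append_right a (c ++ b) 0 j (by omega),
      List.getD_append_right c b 0 _ (by omega),
      List.getD_append_right a b 0 _ (by omega)]
    congr 1
    omega
  · rw [List.getD_eq_default, List.getD_eq_default] <;> simp <;> omega

lemma getD_last (a b c : List ℕ) {j : ℕ} (h1 : a.length + c.length ≤ j) :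
    (a ++ c ++ b).getD j 0 = b.getD (j - a.length - c.length) 0 := by
  rw [List.append_assoc, List.getD_append_right a (c ++ b) 0 j (by omega),
    List.getD_append_right c b 0 _ (by omega)]

lemma getD_rep {k v j : ℕ} (h : j < k) : (List.replicate k v).getD j 0 = v := by
  rw [List.getD_eq_getElem _ _ (by simpa using h)]
  simp

lemma mem_bound {k n : ℕ} (hk : 1 ≤ k) {w : List ℕ} (h : IsStirlingWord k n w) :
    ∀ x ∈ w, 1 ≤ x ∧ x ≤ n := by
  obtain ⟨hlen, hcount, -⟩ := h
  have hsub : Finset.Icc 1 n ⊆ w.toFinset := by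
    intro i hi
    simp only [Finset.mem_Icc] at hi
    have := hcount i hi.1 hi.2
    rw [List.mem_toFinset, ← List.count_pos_iff]
    omega
  have hsum : ∑ i ∈ w.toFinset, w.count i = w.length := by
    simpa using Multiset.toFinset_sum_count_eq (w : Multiset ℕ)
  have hsum2 : ∑ i ∈ Finset.Icc 1 n, w.count i = w.length := by
    rw [Finset.sum_congr rfl (fun i hi => by
      simp only [Finset.mem_Icc] at hi; exact hcount i hi.1 hi.2)]
    simp [hlen, Nat.Icc_eq_range', mul_comm]
  have heq : w.toFinset = Finset.Icc 1 n := by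
    by_contra hne
    obtain ⟨x, hx1, hx2⟩ : ∃ x, x ∈ w.toFinset ∧ x ∉ Finset.Icc 1 n := by
      by_contra hc
      push_neg at hc
      exact hne (Finset.Subset.antisymm hc hsub)
    have hlt := Finset.sum_lt_sum_of_subset (f := fun i => w.count i) hsub hx1 hx2
      (List.count_pos_iff.mpr (List.mem_toFinset.mp hx1))
      (fun j _ _ => Nat.zero_le _)
    omega
  intro x hx
  have : x ∈ Finset.Icc 1 n := heq ▸ List.mem_toFinset.mpr hx
  simpa using this


lemma insert_stirling {k n : ℕ} (hk : 1 ≤ k) (a b : List ℕ)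
    (h : IsStirlingWord k n (a ++ b)) :
    IsStirlingWord k (n + 1) (a ++ List.replicate k (n + 1) ++ b) := by
  have hbd := mem_bound hk h
  obtain ⟨hlen, hcount, hbet⟩ := h
  have hlab : a.length + b.length = k * n := by simpa using hlen
  set la := a.length with hla
  set c := List.replicate k (n + 1) with hc
  have hlc : c.length = k := by simp [hc]
  have hlen' : (a ++ c ++ b).length = k * (n + 1) := by
    simp only [List.length_append, hlc, Nat.mul_succ]
    omega
  refine ⟨hlen', ?_, ?_⟩
  · intro i hi1 hi2
    rcases Nat.lt_or_ge i (n + 1) with hi | hi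
    · have h1 : c.count i = 0 := by
        simp only [hc, List.count_replicate]
        simp only [beq_iff_eq, if_neg (by omega : ¬ (n + 1 = i))]
      have h2 := hcount i hi1 (by omega)
      simp only [List.count_append] at h2 ⊢
      omega
    · have hi' : i = n + 1 := by omega
      subst hi'
      have h1 : (n + 1) ∉ a ++ b := fun hm => by have := hbd _ hm; omega
      have h2 : (a ++ b).count (n + 1) = 0 := List.count_eq_zero.mpr h1
      have h3 : c.count (n + 1) = k := by simp [hc]
      simp only [List.count_append] at h2 ⊢
      omega
  · intro p q r hpq hqr hr hpr
    have hrlen : r < la + k + b.length := by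
      simp only [List.length_append, hlc] at hr
      omega
    -- value facts
    have hval : ∀ t, (t < la ∨ (la + k ≤ t ∧ t < la + k + b.length)) →
        (a ++ c ++ b).getD t 0 = (a ++ b).getD (if t < la then t else t - k) 0 ∧
        (a ++ c ++ b).getD t 0 ≤ n := by
      intro t ht
      rcases ht with ht | ⟨ht1, ht2⟩
      · rw [if_pos ht]
        have he := getD_left a b c (j := t) ht
        refine ⟨he, ?_⟩
        rw [he]
        have : (a ++ b).getD t 0 ∈ a ++ b := by
          rw [List.getD_eq_getElem _ _ (by simp; omega)]
          exact List.getElem_mem _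
        exact (hbd _ this).2
      · rw [if_neg (by omega)]
        have he : (a ++ c ++ b).getD t 0 = (a ++ b).getD (t - k) 0 := by
          rw [getD_right a b c (by omega), hlc]
        refine ⟨he, ?_⟩
        rw [he]
        have : (a ++ b).getD (t - k) 0 ∈ a ++ b := by
          rw [List.getD_eq_getElem _ _ (by simp; omega)]
          exact List.getElem_mem _
        exact (hbd _ this).2
    have hblock : ∀ t, la ≤ t → t < la + k → (a ++ c ++ b).getD t 0 = n + 1 := by
      intro t h1 h2
      rw [getD_mid a b c h1 (by omega), hc, getD_rep (by omega)]
    by_cases hpb : la ≤ p ∧ p < la + k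
    · -- p in block, show r in block, hence q too
      have hp := hblock p hpb.1 hpb.2
      have hrb : r < la + k := by
        by_contra hcon
        have := (hval r (Or.inr ⟨by omega, hrlen⟩)).2
        omega
      have hq := hblock q (by omega) (by omega)
      rw [hp, hq]
    · have hpcase : p < la ∨ (la + k ≤ p ∧ p < la + k + b.length) := by
        rcases Nat.lt_or_ge p la with h1 | h1
        · exact Or.inl h1
        · exact Or.inr ⟨by omega, by omega⟩
      obtain ⟨hpe, hpn⟩ := hval p hpcase
      by_cases hqb : la ≤ q ∧ q < la + k
      · rw [hblock q hqb.1 hqb.2]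
        omega
      · -- q not in block; r not in block either
        have hrb : ¬ (la ≤ r ∧ r < la + k) := by
          intro hcon
          rw [hblock r hcon.1 hcon.2] at hpr
          omega
        have hqcase : q < la ∨ (la + k ≤ q ∧ q < la + k + b.length) := by omega
        have hrcase : r < la ∨ (la + k ≤ r ∧ r < la + k + b.length) := by omega
        obtain ⟨hqe, hqn⟩ := hval q hqcase
        obtain ⟨hre, hrn⟩ := hval r hrcase
        set p' := if p < la then p else p - k with hp'
        set q' := if q < la then q else q - k with hq'
        set r' := if r < la then r else r - k with hr'
        have h1 : p' < q' := by
          simp only [hp', hq']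
          split <;> split <;> omega
        have h2 : q' < r' := by
          simp only [hq', hr']
          split <;> split <;> omega
        have h3 : r' < (a ++ b).length := by
          simp only [hr', List.length_append]
          split <;> omega
        have := hbet p' q' r' h1 h2 h3 (by rw [← hpe, ← hre, hpr])
        rw [hpe, hqe]
        exact this

lemma remove_stirling {k n : ℕ} (hk : 1 ≤ k) (a b : List ℕ)
    (h : IsStirlingWord k (n + 1) (a ++ List.replicate k (n + 1) ++ b)) :
    IsStirlingWord k n (a ++ b) := by
  set c := List.replicate k (n + 1) with hc
  set la := a.length with hla
  obtain ⟨hlen, hcount, hbet⟩ := h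
  have hlc : c.length = k := by simp [hc]
  have hlab : la + b.length = k * n := by
    simp only [List.length_append, hlc, Nat.mul_succ] at hlen
    omega
  refine ⟨by simp only [List.length_append]; omega, ?_, ?_⟩
  · intro i hi1 hi2
    have h1 : c.count i = 0 := by
      simp only [hc, List.count_replicate, beq_iff_eq, if_neg (by omega : ¬ (n + 1 = i))]
    have h2 := hcount i hi1 (by omega)
    simp only [List.count_append] at h2 ⊢
    omega
  · intro p q r hpq hqr hr hpr
    have hrlen : r < la + b.length := by
      simp only [List.length_append] at hr
      omega
    have hval : ∀ t, t < la + b.length →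
        (a ++ b).getD t 0 = (a ++ c ++ b).getD (if t < la then t else t + k) 0 := by
      intro t ht
      split
      · exact (getD_left a b c (by omega)).symm
      · have h2 := getD_right a b c (j := t + k) (by omega)
        rw [hlc, Nat.add_sub_cancel] at h2
        exact h2.symm
    have h1 : (if p < la then p else p + k) < (if q < la then q else q + k) := by
      split <;> split <;> omega
    have h2 : (if q < la then q else q + k) < (if r < la then r else r + k) := by
      split <;> split <;> omega
    have h3 : (if r < la then r else r + k) < (a ++ c ++ b).length := by
      simp only [List.length_append, hlc]
      split <;> omega
    have h4 := hbet _ _ _ h1 h2 h3 (by rw [← hval p (by omega), ← hval r (by omega), hpr])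
    rw [hval p (by omega), hval q (by omega)]
    exact h4

lemma decomp {k n : ℕ} (hk : 1 ≤ k) {w : List ℕ}
    (h : IsStirlingWord k (n + 1) w) :
    ∃ a b, (n + 1) ∉ a ∧ (n + 1) ∉ b ∧ w = a ++ List.replicate k (n + 1) ++ b := by
  have hbd := mem_bound hk h
  obtain ⟨hlen, hcount, hbet⟩ := h
  have hvmem : (n + 1) ∈ w := by
    have := hcount (n + 1) (by omega) le_rfl
    exact List.count_pos_iff.mp (by omega)
  set a := w.takeWhile (fun x => x ≠ n + 1) with ha
  set t := w.dropWhile (fun x => x ≠ n + 1) with ht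
  have hw : w = a ++ t := (List.takeWhile_append_dropWhile).symm
  have hva : (n + 1) ∉ a := fun hm => by simpa using List.mem_takeWhile_imp hm
  have htne : t ≠ [] := by
    intro h0
    rw [hw, h0, List.append_nil] at hvmem
    exact hva hvmem
  have key : ∀ (p : ℕ → Bool) (l : List ℕ) (x : ℕ) (t' : List ℕ),
      l.dropWhile p = x :: t' → p x = false := by
    intro p l
    induction l with
    | nil => simp
    | cons y ys ih =>
      intro x t' hx
      rw [List.dropWhile_cons] at hx
      split at hx
      · exact ih _ _ hx
      · next hpy =>
        cases hx
        simpa using hpy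
  obtain ⟨x0, t0, hxt0⟩ := List.exists_cons_of_ne_nil htne
  have hhead : x0 = n + 1 := by
    have := key _ w x0 t0 (by rw [← ht]; exact hxt0)
    simpa using this
  set c := t.takeWhile (fun x => x = n + 1) with hc
  set b := t.dropWhile (fun x => x = n + 1) with hb
  have htcb : t = c ++ b := (List.takeWhile_append_dropWhile).symm
  have hcall : ∀ y ∈ c, y = n + 1 := fun y hy => by
    simpa using List.mem_takeWhile_imp hy
  have hcne : c ≠ [] := by
    simp [hc, hxt0, hhead]
  have hlc1 : 1 ≤ c.length := List.length_pos_iff.mpr hcne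
  have hbhead : ∀ (y : ℕ) (b' : List ℕ), b = y :: b' → y ≠ n + 1 := by
    intro y b' hyb
    have := key _ t y b' (by rw [← hb]; exact hyb)
    simpa using this
  have hvb : (n + 1) ∉ b := by
    intro hmem
    have hbne : b ≠ [] := List.ne_nil_of_mem hmem
    obtain ⟨y, b', hyb⟩ := List.exists_cons_of_ne_nil hbne
    have hy : y ≠ n + 1 := hbhead y b' hyb
    have hmem' : (n + 1) ∈ b' := by
      rcases (List.mem_cons.mp (hyb ▸ hmem)) with h1 | h1
      · exact absurd h1.symm hy
      · exact h1
    obtain ⟨b1, b2, hb12⟩ := List.append_of_mem hmem'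
    have hwfull : w = a ++ c ++ (y :: (b1 ++ (n + 1) :: b2)) := by
      rw [hw, htcb, hyb, hb12, List.append_assoc]
    have hlenw : w.length = a.length + c.length + (1 + b1.length + 1 + b2.length) := by
      rw [hwfull]; simp; omega
    have hp0 : w.getD a.length 0 = n + 1 := by
      rw [hwfull, getD_mid a _ c le_rfl (by omega), Nat.sub_self]
      have h1 : c.getD 0 0 ∈ c := by
        rw [List.getD_eq_getElem _ _ (by omega)]
        exact List.getElem_mem _
      exact hcall _ h1
    have hq0 : w.getD (a.length + c.length) 0 = y := by
      rw [hwfull, getD_last a _ c (le_refl _)]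
      simp
    have hr0 : w.getD (a.length + c.length + (1 + b1.length)) 0 = n + 1 := by
      rw [hwfull, getD_last a _ c (by omega)]
      have : a.length + c.length + (1 + b1.length) - a.length - c.length
          = b1.length + 1 := by omega
      rw [this, List.getD_cons_succ, List.getD_append_right b1 _ 0 _ le_rfl,
        Nat.sub_self, List.getD_cons_zero]
    have hy2 : y ≤ n + 1 := by
      have : y ∈ w := by rw [hwfull]; simp
      exact (hbd _ this).2
    have := hbet a.length (a.length + c.length) (a.length + c.length + (1 + b1.length))
      (by omega) (by omega) (by omega) (by rw [hp0, hr0])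
    rw [hp0, hq0] at this
    omega
  have hcrep : c = List.replicate c.length (n + 1) :=
    List.eq_replicate_iff.mpr ⟨rfl, hcall⟩
  have hck : c.length = k := by
    have h1 := hcount (n + 1) (by omega) le_rfl
    rw [hw, htcb, List.count_append, List.count_append,
      List.count_eq_zero.mpr hva, List.count_eq_zero.mpr hvb] at h1
    rw [hcrep, List.count_replicate] at h1
    simp only [beq_self_eq_true, if_true] at h1
    omega
  exact ⟨a, b, hva, hvb, by rw [hw, htcb, ← hck, ← hcrep, List.append_assoc]⟩

lemma ne_aux {k n : ℕ} (hk : 1 ≤ k) {w₁ w₂ : List ℕ} {p₁ p₂ : ℕ}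
    (h₂ : IsStirlingWord k n w₂) (hp₁ : p₁ ≤ w₁.length) (hlt : p₁ < p₂) (hp₂ : p₂ ≤ w₂.length)
    (heq : w₁.take p₁ ++ List.replicate k (n + 1) ++ w₁.drop p₁
       = w₂.take p₂ ++ List.replicate k (n + 1) ++ w₂.drop p₂) : False := by
  have ht₁ : (w₁.take p₁).length = p₁ := by rw [List.length_take]; omega
  have ht₂ : (w₂.take p₂).length = p₂ := by rw [List.length_take]; omega
  have hcl : (List.replicate k (n + 1)).length = k := by simp
  have e1 : (w₁.take p₁ ++ List.replicate k (n + 1) ++ w₁.drop p₁).getD p₁ 0 = n + 1 := by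
    rw [getD_mid _ _ _ (by omega) (by omega)]
    have h0 : p₁ - (w₁.take p₁).length = 0 := by omega
    rw [h0]
    exact getD_rep (by omega)
  rw [heq, getD_left _ _ _ (by omega), List.take_append_drop] at e1
  have hmem : w₂.getD p₁ 0 ∈ w₂ := by
    rw [List.getD_eq_getElem _ _ (by omega)]
    exact List.getElem_mem _
  have := (mem_bound hk h₂ _ hmem).2
  omega

lemma card_succ {k n : ℕ} (hk : 1 ≤ k) :
    Nat.card {w : List ℕ // IsStirlingWord k (n + 1) w} =
      Nat.card {w : List ℕ // IsStirlingWord k n w} * (k * n + 1) := by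
  have hbij : Function.Bijective
      (fun x : {w : List ℕ // IsStirlingWord k n w} × Fin (k * n + 1) =>
        (⟨x.1.1.take x.2.1 ++ List.replicate k (n + 1) ++ x.1.1.drop x.2.1,
          insert_stirling hk _ _ (by rw [List.take_append_drop]; exact x.1.2)⟩ :
          {w : List ℕ // IsStirlingWord k (n + 1) w})) := by
    constructor
    · rintro ⟨⟨w₁, h₁⟩, ⟨p₁, hp₁⟩⟩ ⟨⟨w₂, h₂⟩, ⟨p₂, hp₂⟩⟩ heq
      simp only [Subtype.mk.injEq] at heq
      have hl₁ := h₁.1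
      have hl₂ := h₂.1
      have hpp : p₁ = p₂ := by
        by_contra hne
        rcases Nat.lt_or_ge p₁ p₂ with hlt | hge
        · exact ne_aux hk h₂ (by omega) hlt (by omega) heq
        · exact ne_aux hk h₁ (by omega) (by omega) (by omega) heq.symm
      subst hpp
      have ht₁ : (w₁.take p₁).length = p₁ := by rw [List.length_take]; omega
      have ht₂ : (w₂.take p₁).length = p₁ := by rw [List.length_take]; omega
      obtain ⟨e1, e2⟩ := List.append_inj heq (by simp [ht₁, ht₂])
      obtain ⟨e3, -⟩ := List.append_inj e1 (by rw [ht₁, ht₂])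
      have hw : w₁ = w₂ := by
        rw [← List.take_append_drop p₁ w₁, ← List.take_append_drop p₁ w₂, e3, e2]
      simp only [Prod.mk.injEq, Subtype.mk.injEq, Fin.mk.injEq]
      exact ⟨hw, trivial⟩
    · rintro ⟨w', h'⟩
      obtain ⟨a, b, hva, hvb, rfl⟩ := decomp hk h'
      have hab := remove_stirling hk a b h'
      have hla : a.length ≤ k * n := by
        have h0 : (a ++ b).length = k * n := hab.1
        simp only [List.length_append] at h0
        omega
      refine ⟨⟨⟨a ++ b, hab⟩, ⟨a.length, by omega⟩⟩, ?_⟩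
      simp only [Subtype.mk.injEq]
      rw [List.take_left, List.drop_left]
  rw [← Nat.card_eq_of_bijective _ hbij, Nat.card_prod]
  congr 1
  simp

lemma card_one {k : ℕ} (hk : 1 ≤ k) :
    Nat.card {w : List ℕ // IsStirlingWord k 1 w} = 1 := by
  have hrep : IsStirlingWord k 1 (List.replicate k 1) := by
    refine ⟨by simp, ?_, ?_⟩
    · intro i hi1 hi2
      have h0 : i = 1 := by omega
      subst h0
      simp
    · intro p q r hpq hqr hr _
      have hr' : r < k := by simpa using hr
      rw [getD_rep (by omega), getD_rep (by omega)]
  have huniq : ∀ w, IsStirlingWord k 1 w → w = List.replicate k 1 := by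
    intro w hw
    refine List.eq_replicate_iff.mpr ⟨by simpa using hw.1, fun b hb => ?_⟩
    have := mem_bound hk hw b hb
    omega
  haveI : Unique {w : List ℕ // IsStirlingWord k 1 w} :=
    { default := ⟨List.replicate k 1, hrep⟩
      uniq := fun w => Subtype.ext (huniq w.1 w.2) }
  exact Nat.card_unique

end StirlingAux

theorem stirling_count (k n : ℕ) (hk : 1 ≤ k) (hn : 1 ≤ n) :
    Nat.card {w : List ℕ // IsStirlingWord k n w} =
      ∏ i ∈ Finset.Icc 1 (n - 1), (k * i + 1) := by
  induction n, hn using Nat.le_induction with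
  | base => simp [StirlingAux.card_one hk]
  | succ n hn ih =>
    rw [StirlingAux.card_succ hk, ih]
    have h0 : ∏ i ∈ Finset.Icc 1 (n + 1 - 1), (k * i + 1)
        = (∏ i ∈ Finset.Icc 1 (n - 1), (k * i + 1)) * (k * n + 1) := by
      obtain ⟨m, rfl⟩ := Nat.exists_eq_succ_of_ne_zero (by omega : n ≠ 0)
      simp only [Nat.add_sub_cancel]
      exact Finset.prod_Icc_succ_top (by omega) _
    rw [h0]
end

section
/- The number of (k+1)-ary increasing trees of size n equals the number of k-Stirling permutations of size n, both given by ∏_{ℓ=1}^{n}(k(ℓ-1)+1). -/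
/-- A `(k+1)`-ary increasing tree of size `n`, encoded by assigning to each non-root node
(the nodes are `0,…,n-1` with labels increasing in the index, root `0`) a pair
(parent, child position among the `k+1` ordered positions); labels increase along
branches (parent index `<` node index) and each (parent, position) pair holds at most
one child. -/
def AryIncTree (k n : ℕ) :=
  {f : {v : Fin n // (v : ℕ) ≠ 0} → Fin n × Fin (k + 1) //
    (∀ v, ((f v).1 : ℕ) < (v.1 : ℕ)) ∧ Function.Injective f}

open List

/-- insertion of a block of `k` copies of `m` at position `p` -/
def insBlock (k m : ℕ) (w : List ℕ) (p : ℕ) : List ℕ :=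
  w.take p ++ (List.replicate k m ++ w.drop p)

lemma length_insBlock (k m : ℕ) (w : List ℕ) (p : ℕ) (hp : p ≤ w.length) :
    (insBlock k m w p).length = w.length + k := by
  simp [insBlock]; omega

lemma count_insBlock (k m x : ℕ) (w : List ℕ) (p : ℕ) :
    (insBlock k m w p).count x = w.count x + if m = x then k else 0 := by
  have h2 : (w.take p).count x + (w.drop p).count x = w.count x := by
    rw [← List.count_append, List.take_append_drop]
  simp only [insBlock, List.count_append, List.count_replicate, beq_iff_eq]
  split_ifs <;> omega

lemma getD_insBlock (k m : ℕ) (w : List ℕ) (p : ℕ) (hp : p ≤ w.length) (i : ℕ) :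
    (insBlock k m w p).getD i 0 =
      if i < p then w.getD i 0 else if i < p + k then m else w.getD (i - k) 0 := by
  have hlt : (w.take p).length = p := by simp; omega
  rcases lt_or_ge i p with h1 | h1
  · rw [if_pos h1, insBlock, List.getD_append _ _ _ _ (by omega)]
    conv_rhs => rw [← List.take_append_drop p w, List.getD_append _ _ _ _ (by omega)]
  · rw [if_neg (by omega), insBlock, List.getD_append_right _ _ _ _ (by omega), hlt]
    rcases lt_or_ge i (p + k) with h2 | h2
    · rw [if_pos h2, List.getD_append _ _ _ _ (by simp; omega)]
      rw [List.getD_eq_getElem _ _ (by simp; omega)]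
      simp
    · rw [if_neg (by omega), List.getD_append_right _ _ _ _ (by simp; omega)]
      conv_rhs => rw [← List.take_append_drop p w,
        List.getD_append_right _ _ _ _ (by omega), hlt]
      congr 1
      simp
      omega

lemma stirling_mem_bound {k n : ℕ} {w : List ℕ} (hk : 1 ≤ k)
    (hw : IsStirlingWord k n w) {x : ℕ} (hx : x ∈ w) : 1 ≤ x ∧ x ≤ n := by
  obtain ⟨hlen, hcount, _⟩ := hw
  have hsub : Finset.Icc 1 n ⊆ w.toFinset := by
    intro i hi
    simp only [Finset.mem_Icc] at hi
    have := hcount i hi.1 hi.2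
    exact List.mem_toFinset.mpr (List.count_pos_iff.mp (by omega))
  have hsum : ∑ i ∈ Finset.Icc 1 n, w.count i = k * n := by
    rw [Finset.sum_congr rfl (fun i hi => by
      simp only [Finset.mem_Icc] at hi; exact hcount i hi.1 hi.2)]
    simp [Nat.card_Icc, mul_comm]
  have htot := List.sum_toFinset_count_eq_length w
  have hzero : ∑ i ∈ w.toFinset \ Finset.Icc 1 n, w.count i = 0 := by
    rw [← Finset.sum_sdiff hsub] at htot
    omega
  by_contra hcon
  have hx' : x ∈ w.toFinset \ Finset.Icc 1 n := by
    simp only [Finset.mem_sdiff, List.mem_toFinset, Finset.mem_Icc]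
    exact ⟨hx, by omega⟩
  have hle := Finset.sum_eq_zero_iff.mp hzero x hx'
  have := List.count_pos_iff.mpr hx
  omega

lemma stirling_getD_le {k n : ℕ} {w : List ℕ} (hk : 1 ≤ k)
    (hw : IsStirlingWord k n w) (i : ℕ) : w.getD i 0 ≤ n := by
  rcases lt_or_ge i w.length with h | h
  · rw [List.getD_eq_getElem _ _ h]
    exact (stirling_mem_bound hk hw (List.getElem_mem h)).2
  · rw [List.getD_eq_default _ _ h]; omega

lemma stirling_insBlock {k n : ℕ} {w : List ℕ} (hk : 1 ≤ k)
    (hw : IsStirlingWord k n w) {p : ℕ} (hp : p ≤ k * n) :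
    IsStirlingWord k (n + 1) (insBlock k (n + 1) w p) := by
  obtain ⟨hlen, hcount, hcond⟩ := hw
  have hp' : p ≤ w.length := by omega
  have hbd : ∀ i, w.getD i 0 ≤ n := stirling_getD_le hk ⟨hlen, hcount, hcond⟩
  have hnmem : (n + 1) ∉ w := fun h =>
    by have := (stirling_mem_bound hk ⟨hlen, hcount, hcond⟩ h).2; omega
  refine ⟨?_, ?_, ?_⟩
  · rw [length_insBlock _ _ _ _ hp', hlen]; ring
  · intro i h1 h2
    rw [count_insBlock]
    rcases Nat.lt_or_ge i (n+1) with h3 | h3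
    · rw [if_neg (by omega), hcount i h1 (by omega)]
      omega
    · have : i = n + 1 := by omega
      subst this
      rw [if_pos rfl, List.count_eq_zero_of_not_mem hnmem]
      omega
  · intro P Q R hPQ hQR hR hEq
    rw [length_insBlock _ _ _ _ hp'] at hR
    simp only [getD_insBlock _ _ _ _ hp'] at hEq ⊢
    split_ifs at hEq ⊢ <;>
      first
      | omega
      | (exact hcond _ _ _ (by omega) (by omega) (by omega) (by omega))
      | (exact le_trans (hbd _) (by omega))
      | (have := hbd (P - k); omega)
      | (have := hbd P; omega)
      | (have := hbd (R - k); omega)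
      | (have := hbd R; omega)
      | (exact hcond _ _ _ (by omega) (by omega) (by omega) hEq)
      | (exact hcond P Q (R - k) (by omega) (by omega) (by omega) hEq)
      | (exact hcond P (Q - k) (R - k) (by omega) (by omega) (by omega) hEq)
      | (exact hcond (P - k) (Q - k) (R - k) (by omega) (by omega) (by omega) hEq)

lemma dropWhile_head_false {p : ℕ → Bool} :
    ∀ (l : List ℕ) {x : ℕ} {r' : List ℕ}, l.dropWhile p = x :: r' → p x = false := by
  intro l
  induction l with
  | nil => intro x r' h; simp at h
  | cons y ys ih =>
    intro x r' h
    by_cases hy : p y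
    · rw [List.dropWhile_cons_of_pos hy] at h
      exact ih h
    · rw [List.dropWhile_cons_of_neg hy] at h
      simp at h
      rw [← h.1]
      exact Bool.eq_false_iff.mpr hy

def blkPos (m : ℕ) (w : List ℕ) : ℕ := (w.takeWhile (fun x => x ≠ m)).length

def remBlock (k m : ℕ) (w : List ℕ) : List ℕ :=
  w.takeWhile (fun x => x ≠ m) ++ w.drop (blkPos m w + k)

lemma stirling_of_insBlock {k n : ℕ} {w' : List ℕ} {p : ℕ} (hp : p ≤ w'.length)
    (h : IsStirlingWord k (n + 1) (insBlock k (n + 1) w' p)) : IsStirlingWord k n w' := by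
  obtain ⟨hlen, hcount, hcond⟩ := h
  rw [length_insBlock _ _ _ _ hp] at hlen
  have hlen' : w'.length = k * n := by
    have : k * (n + 1) = k * n + k := by ring
    omega
  refine ⟨hlen', ?_, ?_⟩
  · intro i h1 h2
    have := hcount i h1 (by omega)
    rw [count_insBlock, if_neg (by omega)] at this
    omega
  · intro P Q R hPQ hQR hR hEq
    have key : ∀ i, i < w'.length →
        (insBlock k (n + 1) w' p).getD (if i < p then i else i + k) 0 = w'.getD i 0 := by
      intro i hi
      rw [getD_insBlock _ _ _ _ hp]
      by_cases hip : i < p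
      · rw [if_pos hip, if_pos hip]
      · rw [if_neg hip, if_neg (by omega), if_neg (by omega)]
        congr 1
        omega
    have h3 := hcond (if P < p then P else P + k) (if Q < p then Q else Q + k)
        (if R < p then R else R + k)
        (by split_ifs <;> omega) (by split_ifs <;> omega)
        (by rw [length_insBlock _ _ _ _ hp]; split_ifs <;> omega)
        (by rw [key P (by omega), key R hR]; exact hEq)
    rw [key P (by omega), key Q (by omega)] at h3
    exact h3

lemma struct_stirling {k n : ℕ} {w : List ℕ} (hk : 1 ≤ k)
    (hw : IsStirlingWord k (n + 1) w) :
    w = insBlock k (n + 1) (remBlock k (n + 1) w) (blkPos (n + 1) w) ∧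
      blkPos (n + 1) w ≤ (remBlock k (n + 1) w).length ∧
      (remBlock k (n + 1) w).length + k = w.length := by
  obtain ⟨hlen, hcount, hcond⟩ := hw
  set P : ℕ → Bool := fun x => x ≠ (n + 1) with hP
  set a := w.takeWhile P with ha
  set r := w.dropWhile P with hr
  have h1 : w = a ++ r := List.takeWhile_append_dropWhile.symm
  have hmem : (n + 1) ∈ w := List.count_pos_iff.mp
    (by rw [hcount (n+1) (by omega) le_rfl]; omega)
  have hna : ∀ x ∈ a, x ≠ n + 1 := by
    intro x hx
    have := List.mem_takeWhile_imp hx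
    simpa [hP] using this
  have hcnt_a : a.count (n + 1) = 0 := List.count_eq_zero.mpr (fun h => hna _ h rfl)
  have hcnt_w : w.count (n + 1) = k := hcount (n+1) (by omega) le_rfl
  have hcnt_r : r.count (n + 1) = k := by
    have : w.count (n+1) = a.count (n+1) + r.count (n+1) := by
      conv_lhs => rw [h1]
      rw [List.count_append]
    omega
  have hrne : r ≠ [] := by
    intro hre
    rw [hre] at hcnt_r
    simp at hcnt_r
    omega
  have hr0 : r.getD 0 0 = n + 1 := by
    obtain ⟨x, r', hxr⟩ := List.exists_cons_of_ne_nil hrne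
    have hx : P x = false := dropWhile_head_false w (by rw [← hr]; exact hxr)
    simp [hP] at hx
    rw [hxr]
    simpa using hx
  have hkr : k ≤ r.length := hcnt_r ▸ List.count_le_length
  have hgw : ∀ t, w.getD (a.length + t) 0 = r.getD t 0 := by
    intro t
    conv_lhs => rw [h1]
    rw [List.getD_append_right _ _ _ _ (by omega)]
    congr 1
    omega
  have hwbd : ∀ x ∈ w, x ≤ n + 1 := fun x hx =>
    (stirling_mem_bound hk ⟨hlen, hcount, hcond⟩ hx).2
  have C : r.take k = List.replicate k (n + 1) := by
    rw [List.eq_replicate_iff]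
    refine ⟨by simp; omega, ?_⟩
    intro b hb
    by_contra hbne
    obtain ⟨j, hj, hbj⟩ := List.mem_iff_getElem.mp hb
    have hjk : j < k := by simp at hj; omega
    have hjr : j < r.length := by simp at hj; omega
    rw [List.getElem_take] at hbj
    have hj0 : j ≠ 0 := by
      intro h0
      subst h0
      rw [List.getD_eq_getElem _ _ hjr] at hr0
      exact hbne (hbj ▸ hr0)
    have hafter : ∀ i, j ≤ i → i < r.length → r.getD i 0 ≠ n + 1 := by
      intro i hji hi hcon
      rcases Nat.eq_or_lt_of_le hji with hc | hc
      · subst hc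
        rw [List.getD_eq_getElem _ _ hi, hbj] at hcon
        exact hbne hcon
      · have hw1 : w.getD a.length 0 = n + 1 := by
          have h4 := hgw 0
          rw [Nat.add_zero] at h4
          rw [h4, hr0]
        have hw3 : w.getD (a.length + i) 0 = n + 1 := by rw [hgw]; exact hcon
        have hle := hcond a.length (a.length + j) (a.length + i)
          (by omega) (by omega) (by rw [h1]; simp; omega) (by rw [hw1, hw3])
        rw [hw1, hgw] at hle
        have hbw : b ∈ w := by
          rw [h1]
          exact List.mem_append.mpr (Or.inr (hbj ▸ List.getElem_mem hjr))
        have hble := hwbd b hbw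
        rw [List.getD_eq_getElem _ _ hjr, hbj] at hle
        omega
    have hdropc : (r.drop j).count (n+1) = 0 := by
      rw [List.count_eq_zero]
      intro hmem2
      obtain ⟨t, ht, hgt⟩ := List.mem_iff_getElem.mp hmem2
      have htr : j + t < r.length := by simp at ht; omega
      rw [List.getElem_drop] at hgt
      exact hafter (j+t) (by omega) htr
        (by rw [List.getD_eq_getElem _ _ htr]; exact hgt)
    have htakec : (r.take j).count (n+1) ≤ j :=
      le_trans (List.count_le_length) (by simp)
    have hsplit : r.count (n+1) = (r.take j).count (n+1) + (r.drop j).count (n+1) := by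
      conv_lhs => rw [← List.take_append_drop j r]
      rw [List.count_append]
    omega
  have hblk : blkPos (n+1) w = a.length := rfl
  have hdw : w.drop (a.length + k) = r.drop k := by
    conv_lhs => rw [h1]
    exact List.drop_length_add_append k
  have hrem : remBlock k (n+1) w = a ++ r.drop k := by
    show a ++ w.drop (blkPos (n+1) w + k) = a ++ r.drop k
    rw [hblk, hdw]
  refine ⟨?_, ?_, ?_⟩
  · rw [hrem, hblk]
    show w = (a ++ r.drop k).take a.length ++
      (List.replicate k (n+1) ++ (a ++ r.drop k).drop a.length)
    rw [List.take_left, List.drop_left, ← C]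
    conv_lhs => rw [h1, ← List.take_append_drop k r]
  · rw [hrem, hblk]
    simp
  · rw [hrem]
    have : w.length = a.length + r.length := by rw [h1]; simp
    simp
    omega

lemma takeWhile_insBlock {k m p : ℕ} {w' : List ℕ} (hk : 1 ≤ k) (hp : p ≤ w'.length)
    (hb : ∀ x ∈ w', x ≠ m) :
    (insBlock k m w' p).takeWhile (fun x => x ≠ m) = w'.take p := by
  obtain ⟨k', rfl⟩ : ∃ k', k = k' + 1 := ⟨k - 1, by omega⟩
  unfold insBlock
  rw [List.replicate_succ]
  have htw : List.takeWhile (fun x => x ≠ m) (w'.take p) = w'.take p :=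
    List.takeWhile_eq_self_iff.mpr
      (by intro x hx; simpa using hb x (List.mem_of_mem_take hx))
  rw [List.takeWhile_append, if_pos (by rw [htw]), List.cons_append,
    List.takeWhile_cons_of_neg (by simp), List.append_nil]

lemma blkPos_insBlock {k m p : ℕ} {w' : List ℕ} (hk : 1 ≤ k) (hp : p ≤ w'.length)
    (hb : ∀ x ∈ w', x ≠ m) : blkPos m (insBlock k m w' p) = p := by
  unfold blkPos
  rw [takeWhile_insBlock hk hp hb]
  simp
  omega

lemma remBlock_insBlock {k m p : ℕ} {w' : List ℕ} (hk : 1 ≤ k) (hp : p ≤ w'.length)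
    (hb : ∀ x ∈ w', x ≠ m) : remBlock k m (insBlock k m w' p) = w' := by
  unfold remBlock
  rw [takeWhile_insBlock hk hp hb, blkPos_insBlock hk hp hb]
  have hl : (w'.take p).length = p := by simp; omega
  show w'.take p ++ (w'.take p ++ (List.replicate k m ++ w'.drop p)).drop (p + k) = w'
  rw [show p + k = (w'.take p).length + k from by rw [hl],
    List.drop_length_add_append, List.drop_left' (by simp), List.take_append_drop]

noncomputable def wordEquiv (k n : ℕ) (hk : 1 ≤ k) :
    {w : List ℕ // IsStirlingWord k (n+1) w} ≃
      {w : List ℕ // IsStirlingWord k n w} × Fin (k*n+1) where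
  toFun w :=
    ⟨⟨remBlock k (n+1) w.1,
      stirling_of_insBlock (struct_stirling hk w.2).2.1
        ((struct_stirling hk w.2).1 ▸ w.2)⟩,
     ⟨blkPos (n+1) w.1, by
        have h := struct_stirling hk w.2
        have h2 := w.2.1
        have h3 : k * (n + 1) = k * n + k := by ring
        omega⟩⟩
  invFun x := ⟨insBlock k (n+1) x.1.1 x.2.1,
    stirling_insBlock hk x.1.2 (by have := x.2.isLt; omega)⟩
  left_inv w := Subtype.ext (struct_stirling hk w.2).1.symm
  right_inv x := by
    have hp : (x.2 : ℕ) ≤ x.1.1.length := by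
      have := x.2.isLt
      have := x.1.2.1
      omega
    have hb : ∀ y ∈ x.1.1, y ≠ n + 1 := by
      intro y hy
      have := (stirling_mem_bound hk x.1.2 hy).2
      omega
    refine Prod.ext (Subtype.ext ?_) (Fin.ext ?_)
    · exact remBlock_insBlock hk hp hb
    · exact blkPos_insBlock hk hp hb

lemma stirling_card_one (k : ℕ) (hk : 1 ≤ k) :
    Nat.card {w : List ℕ // IsStirlingWord k 1 w} = 1 := by
  have huniq : ∀ w : List ℕ, IsStirlingWord k 1 w ↔ w = List.replicate k 1 := by
    intro w
    constructor
    · intro hw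
      rw [List.eq_replicate_iff]
      refine ⟨by rw [hw.1]; ring, ?_⟩
      intro b hb
      have := stirling_mem_bound hk hw hb
      omega
    · rintro rfl
      refine ⟨by simp [mul_comm], ?_, ?_⟩
      · intro i h1 h2
        have : i = 1 := by omega
        subst this
        simp
      · intro p q r hpq hqr hr _
        simp at hr
        have h1 : ∀ i, i < k → (List.replicate k 1).getD i 0 = 1 := by
          intro i hi
          rw [List.getD_eq_getElem _ _ (by simpa using hi)]
          simp
        rw [h1 p (by omega), h1 q (by omega)]
  haveI : Unique {w : List ℕ // IsStirlingWord k 1 w} :=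
    { default := ⟨List.replicate k 1, (huniq _).mpr rfl⟩
      uniq := fun w => Subtype.ext ((huniq _).mp w.2) }
  exact Nat.card_unique

lemma stirling_card (k n : ℕ) (hk : 1 ≤ k) (hn : 1 ≤ n) :
    Nat.card {w : List ℕ // IsStirlingWord k n w} =
      ∏ ℓ ∈ Finset.Icc 1 n, (k * (ℓ - 1) + 1) := by
  induction n, hn using Nat.le_induction with
  | base => simpa using stirling_card_one k hk
  | succ n hn ih =>
    rw [Nat.card_congr (wordEquiv k n hk), Nat.card_prod, ih,
      Finset.prod_Icc_succ_top (by omega)]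
    simp [mul_comm]

section Tree

variable {k n : ℕ}

/-- slots already occupied by children -/
def usedSlots (t : AryIncTree k n) : Finset (Fin n × Fin (k + 1)) :=
  Finset.univ.image t.1

def freeSlots (t : AryIncTree k n) : Finset (Fin n × Fin (k + 1)) :=
  Finset.univ \ usedSlots t

lemma card_NZ (n : ℕ) : Fintype.card {v : Fin n // (v : ℕ) ≠ 0} = n - 1 := by
  rcases n with _ | m
  · have : IsEmpty {v : Fin 0 // (v : ℕ) ≠ 0} := ⟨fun v => v.1.elim0⟩
    simp [Fintype.card_eq_zero]
  · have h0 : Fintype.card {v : Fin (m+1) // (v : ℕ) = 0} = 1 :=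
      Fintype.card_eq_one_iff.mpr ⟨⟨0, rfl⟩, fun y => Subtype.ext (Fin.ext (by simp [y.2]))⟩
    have h1 := Fintype.card_subtype_compl (fun v : Fin (m+1) => (v : ℕ) = 0)
    rw [h0] at h1
    rw [Fintype.card_congr (Equiv.subtypeEquivRight
      (q := fun v : Fin (m+1) => ¬ (v : ℕ) = 0) (fun v => Iff.rfl)), h1]
    simp

lemma card_freeSlots (hn : 1 ≤ n) (t : AryIncTree k n) :
    (freeSlots t).card = k * n + 1 := by
  have h1 : (usedSlots t).card = n - 1 := by
    rw [usedSlots, Finset.card_image_of_injective _ t.2.2, Finset.card_univ, card_NZ]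
  rw [freeSlots, Finset.card_sdiff_of_subset (Finset.subset_univ _), h1, Finset.card_univ]
  have h2 : Fintype.card (Fin n × Fin (k+1)) = n * (k+1) := by simp
  have h3 : n * (k+1) = n * k + n := by ring
  have h4 : n * k = k * n := mul_comm n k
  omega


def embNZ (u : {v : Fin n // (v : ℕ) ≠ 0}) : {v : Fin (n+1) // (v : ℕ) ≠ 0} :=
  ⟨u.1.castSucc, by simpa using u.2⟩

lemma embNZ_inj : Function.Injective (embNZ (n := n)) := by
  intro u u' h
  simp only [embNZ, Subtype.mk.injEq, Fin.ext_iff, Fin.coe_castSucc] at h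
  exact Subtype.ext (Fin.ext h)

def lastNZ (hn : 1 ≤ n) : {v : Fin (n+1) // (v : ℕ) ≠ 0} :=
  ⟨Fin.last n, by simp; omega⟩

lemma fwd_lt (t : AryIncTree k (n+1)) (u : {v : Fin n // (v : ℕ) ≠ 0}) :
    ((t.1 (embNZ u)).1 : ℕ) < n := lt_trans (t.2.1 (embNZ u)) u.1.isLt

lemma fwd_lt_last (hn : 1 ≤ n) (t : AryIncTree k (n+1)) :
    ((t.1 (lastNZ hn)).1 : ℕ) < n := by simpa [lastNZ] using t.2.1 (lastNZ hn)

def treeFwdG (t : AryIncTree k (n+1)) (u : {v : Fin n // (v : ℕ) ≠ 0}) :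
    Fin n × Fin (k+1) :=
  ((t.1 (embNZ u)).1.castLT (fwd_lt t u), (t.1 (embNZ u)).2)

lemma treeFwdG_inj (t : AryIncTree k (n+1)) : Function.Injective (treeFwdG t) := by
  intro u u' h
  simp only [treeFwdG, Prod.mk.injEq, Fin.ext_iff, Fin.coe_castLT] at h
  exact embNZ_inj (t.2.2 (Prod.ext (Fin.ext h.1) (Fin.ext h.2)))

def treeFwdT (t : AryIncTree k (n+1)) : AryIncTree k n :=
  ⟨treeFwdG t, fun u => t.2.1 (embNZ u), treeFwdG_inj t⟩

def treeFwdS (hn : 1 ≤ n) (t : AryIncTree k (n+1)) : Fin n × Fin (k+1) :=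
  ((t.1 (lastNZ hn)).1.castLT (fwd_lt_last hn t), (t.1 (lastNZ hn)).2)

lemma treeFwdS_free (hn : 1 ≤ n) (t : AryIncTree k (n+1)) :
    treeFwdS hn t ∈ freeSlots (treeFwdT t) := by
  simp only [freeSlots, usedSlots, Finset.mem_sdiff, Finset.mem_univ, true_and,
    Finset.mem_image, not_exists]
  intro u
  simp only [treeFwdT]
  intro hcon
  simp only [treeFwdG, treeFwdS, Prod.mk.injEq, Fin.ext_iff, Fin.coe_castLT] at hcon
  have h2 : t.1 (embNZ u) = t.1 (lastNZ hn) := Prod.ext (Fin.ext hcon.1) (Fin.ext hcon.2)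
  have h3 := t.2.2 h2
  have h4 : ((embNZ u).1 : ℕ) = ((lastNZ hn).1 : ℕ) := by rw [h3]
  have h5 := u.1.isLt
  simp [embNZ, lastNZ] at h4
  omega

def treeFwd (hn : 1 ≤ n) (t : AryIncTree k (n+1)) :
    Σ t' : AryIncTree k n, {s : Fin n × Fin (k+1) // s ∈ freeSlots t'} :=
  ⟨treeFwdT t, ⟨treeFwdS hn t, treeFwdS_free hn t⟩⟩

def treeBwdF (g : {v : Fin n // (v : ℕ) ≠ 0} → Fin n × Fin (k+1))
    (s : Fin n × Fin (k+1)) (v : {v : Fin (n+1) // (v : ℕ) ≠ 0}) :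
    Fin (n+1) × Fin (k+1) :=
  if h : (v.1 : ℕ) < n then
    ((g ⟨⟨v.1, h⟩, v.2⟩).1.castSucc, (g ⟨⟨v.1, h⟩, v.2⟩).2)
  else (s.1.castSucc, s.2)

lemma treeBwdF_lt {g : {v : Fin n // (v : ℕ) ≠ 0} → Fin n × Fin (k+1)}
    (hg1 : ∀ u, ((g u).1 : ℕ) < (u.1 : ℕ)) (s : Fin n × Fin (k+1))
    (v : {v : Fin (n+1) // (v : ℕ) ≠ 0}) : ((treeBwdF g s v).1 : ℕ) < (v.1 : ℕ) := by
  unfold treeBwdF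
  by_cases h : (v.1 : ℕ) < n
  · rw [dif_pos h]
    simpa using hg1 ⟨⟨v.1, h⟩, v.2⟩
  · rw [dif_neg h]
    have h1 := v.1.isLt
    have h2 := s.1.isLt
    simp
    omega

lemma treeBwdF_inj {g : {v : Fin n // (v : ℕ) ≠ 0} → Fin n × Fin (k+1)}
    (hg2 : Function.Injective g) {s : Fin n × Fin (k+1)}
    (hs : ∀ u, g u ≠ s) : Function.Injective (treeBwdF g s) := by
  intro v v' h
  unfold treeBwdF at h
  by_cases h1 : (v.1 : ℕ) < n <;> by_cases h2 : (v'.1 : ℕ) < n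
  · rw [dif_pos h1, dif_pos h2] at h
    simp only [Prod.mk.injEq, Fin.ext_iff, Fin.coe_castSucc] at h
    have h3 := hg2 (a₁ := ⟨⟨v.1, h1⟩, v.2⟩) (a₂ := ⟨⟨v'.1, h2⟩, v'.2⟩)
      (Prod.ext (Fin.ext h.1) (Fin.ext h.2))
    simp only [Subtype.mk.injEq, Fin.mk.injEq] at h3
    exact Subtype.ext (Fin.ext h3)
  · rw [dif_pos h1, dif_neg h2] at h
    simp only [Prod.mk.injEq, Fin.ext_iff, Fin.coe_castSucc] at h
    exact absurd (Prod.ext (Fin.ext h.1) (Fin.ext h.2)) (hs ⟨⟨v.1, h1⟩, v.2⟩)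
  · rw [dif_neg h1, dif_pos h2] at h
    simp only [Prod.mk.injEq, Fin.ext_iff, Fin.coe_castSucc] at h
    exact absurd (Prod.ext (Fin.ext h.1.symm) (Fin.ext h.2.symm)) (hs ⟨⟨v'.1, h2⟩, v'.2⟩)
  · have hv := v.1.isLt
    have hv' := v'.1.isLt
    exact Subtype.ext (Fin.ext (by omega))

lemma freeSlots_forall {t' : AryIncTree k n} {s : Fin n × Fin (k+1)}
    (hs : s ∈ freeSlots t') : ∀ u, t'.1 u ≠ s := by
  simp only [freeSlots, usedSlots, Finset.mem_sdiff, Finset.mem_univ, true_and,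
    Finset.mem_image, not_exists] at hs
  exact fun u => hs u

def treeBwd (x : Σ t' : AryIncTree k n, {s : Fin n × Fin (k+1) // s ∈ freeSlots t'}) :
    AryIncTree k (n+1) :=
  ⟨treeBwdF x.1.1 x.2.1,
    fun v => treeBwdF_lt x.1.2.1 x.2.1 v,
    treeBwdF_inj x.1.2.2 (freeSlots_forall x.2.2)⟩

def treeEquiv (hn : 1 ≤ n) :
    AryIncTree k (n+1) ≃ Σ t' : AryIncTree k n, {s : Fin n × Fin (k+1) // s ∈ freeSlots t'} where
  toFun := treeFwd hn
  invFun := treeBwd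
  left_inv t := by
    apply Subtype.ext
    funext v
    show treeBwdF (treeFwdG t) (treeFwdS hn t) v = t.1 v
    unfold treeBwdF
    by_cases h : (v.1 : ℕ) < n
    · rw [dif_pos h]
      have he : embNZ (⟨⟨(v.1 : ℕ), h⟩, v.2⟩ : {u : Fin n // (u : ℕ) ≠ 0}) = v :=
        Subtype.ext (Fin.ext rfl)
      simp only [treeFwdG]
      conv_rhs => rw [← he]
      exact Prod.ext (Fin.ext (by simp)) rfl
    · rw [dif_neg h]
      have hv : lastNZ hn = v := by
        have := v.1.isLt
        exact Subtype.ext (Fin.ext (by simp [lastNZ]; omega))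
      simp only [treeFwdS]
      conv_rhs => rw [← hv]
      exact Prod.ext (Fin.ext (by simp)) rfl
  right_inv x := by
    have h1 : (treeFwd hn (treeBwd x)).1 = x.1 := by
      apply Subtype.ext
      funext u
      show treeFwdG (treeBwd x) u = x.1.1 u
      have hu : ((embNZ u).1 : ℕ) < n := by
        simpa [embNZ] using u.1.isLt
      have hu2 : (⟨⟨((embNZ u).1 : ℕ), hu⟩, (embNZ u).2⟩ : {v : Fin n // (v : ℕ) ≠ 0}) = u :=
        Subtype.ext (Fin.ext (by simp [embNZ]))
      refine Prod.ext (Fin.ext ?_) ?_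
      · show ((treeBwdF x.1.1 x.2.1 (embNZ u)).1 : ℕ) = ((x.1.1 u).1 : ℕ)
        simp only [treeBwdF]
        rw [dif_pos hu, hu2]
        simp
      · show (treeBwdF x.1.1 x.2.1 (embNZ u)).2 = (x.1.1 u).2
        simp only [treeBwdF]
        rw [dif_pos hu, hu2]
    refine Sigma.ext h1 ((Subtype.heq_iff_coe_eq ?_).mpr ?_)
    · intro y
      rw [h1]
    · show treeFwdS hn (treeBwd x) = (x.2 : Fin n × Fin (k+1))
      have hl : ¬ (((lastNZ (n := n) hn).1 : Fin (n+1)) : ℕ) < n := by simp [lastNZ]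
      refine Prod.ext (Fin.ext ?_) ?_
      · show ((treeBwdF x.1.1 x.2.1 (lastNZ hn)).1 : ℕ) = ((x.2.1.1 : Fin n) : ℕ)
        simp only [treeBwdF]
        rw [dif_neg hl]
        simp
      · show (treeBwdF x.1.1 x.2.1 (lastNZ hn)).2 = x.2.1.2
        simp only [treeBwdF]
        rw [dif_neg hl]

end Tree

noncomputable def treeEquiv2 (hn : 1 ≤ n) :
    AryIncTree k (n+1) ≃ AryIncTree k n × Fin (k*n+1) :=
  (treeEquiv hn).trans ((Equiv.sigmaCongrRight fun t' =>
    Finset.equivFinOfCardEq (card_freeSlots hn t')).trans (Equiv.sigmaEquivProd _ _))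

lemma tree_card_one (k : ℕ) : Nat.card (AryIncTree k 1) = 1 := by
  haveI : IsEmpty {v : Fin 1 // (v : ℕ) ≠ 0} := ⟨fun v => v.2 (Nat.lt_one_iff.mp v.1.isLt)⟩
  haveI : Unique (AryIncTree k 1) :=
    { default := ⟨fun v => isEmptyElim v, fun v => isEmptyElim v, fun a => isEmptyElim a⟩
      uniq := fun t => Subtype.ext (funext fun v => isEmptyElim v) }
  exact Nat.card_unique

lemma tree_card (k n : ℕ) (hn : 1 ≤ n) :
    Nat.card (AryIncTree k n) = ∏ ℓ ∈ Finset.Icc 1 n, (k * (ℓ - 1) + 1) := by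
  induction n, hn using Nat.le_induction with
  | base => simpa using tree_card_one k
  | succ n hn ih =>
    rw [Nat.card_congr (treeEquiv2 hn), Nat.card_prod, ih,
      Finset.prod_Icc_succ_top (by omega)]
    simp [mul_comm]

/-- The numbers of `(k+1)`-ary increasing trees of size `n` and of `k`-Stirling
permutations of size `n` are both `∏_{ℓ=1}^{n}(k(ℓ-1)+1)`. -/
theorem ary_tree_eq_stirling_count (k n : ℕ) (hk : 1 ≤ k) (hn : 1 ≤ n) :
    Nat.card (AryIncTree k n) = ∏ ℓ ∈ Finset.Icc 1 n, (k * (ℓ - 1) + 1) ∧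
    Nat.card {w : List ℕ // IsStirlingWord k n w} =
      ∏ ℓ ∈ Finset.Icc 1 n, (k * (ℓ - 1) + 1) := by
  exact ⟨tree_card k n hn, stirling_card k n hk hn⟩
end

section
/- The number of path diagrams of length n with step vectors a_ℓ=(1,ℓ) (1≤ℓ≤k), b=(1,-1), c=(1,0) and possibility function pos(a_{j,ℓ}) = C(k+1,ℓ+1)(j+1), pos(b_j) = j+1, pos(c_j) = (k+1)(j+1) equals ∏_{ℓ=1}^{n+1}(k(ℓ-1)+1), the number of (k+1)-ary increasing trees of size n+1. -/
/-- Height of the path after `j` steps, where each step carries (increment, choice). -/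
def pathHeight (u : List (ℤ × ℕ)) (j : ℕ) : ℤ :=
  ((u.take j).map Prod.fst).sum

/-- The possibility function: for a step of increment `d` (rise `a_ℓ` with `d = ℓ ≥ 1`,
fall `b` with `d = -1`, level `c` with `d = 0`) starting at height `y`:
`pos(a_{j,ℓ}) = C(k+1,ℓ+1)(j+1)`, `pos(b_j) = j+1`, `pos(c_j) = (k+1)(j+1)`. -/
def posFun (k : ℕ) (d : ℤ) (y : ℤ) : ℕ :=
  if d = -1 then y.toNat + 1
  else if d = 0 then (k + 1) * (y.toNat + 1)
  else Nat.choose (k + 1) (d.toNat + 1) * (y.toNat + 1)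

/-- A path diagram of length `n`: a nonnegative lattice path from height `0` to height `0`
with steps `a_1,…,a_k,b,c`, each step `j` equipped with a choice `s_j < pos(v_j)` where
`v_j` is the step labeled by its starting height. -/
def IsPathDiagram (k n : ℕ) (u : List (ℤ × ℕ)) : Prop :=
  u.length = n ∧
  (∀ p ∈ u, p.1 = -1 ∨ p.1 = 0 ∨ (1 ≤ p.1 ∧ p.1 ≤ (k : ℤ))) ∧
  (∀ j ≤ n, 0 ≤ pathHeight u j) ∧
  pathHeight u n = 0 ∧
  ∀ j < n, (u.getD j (0, 0)).2 < posFun k (u.getD j (0, 0)).1 (pathHeight u j)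

/-- Generalization of `IsPathDiagram` to end height `y`. -/
def PreDiagram (k n y : ℕ) (u : List (ℤ × ℕ)) : Prop :=
  u.length = n ∧
  (∀ p ∈ u, p.1 = -1 ∨ p.1 = 0 ∨ (1 ≤ p.1 ∧ p.1 ≤ (k : ℤ))) ∧
  (∀ j ≤ n, 0 ≤ pathHeight u j) ∧
  pathHeight u n = (y : ℤ) ∧
  ∀ j < n, (u.getD j (0, 0)).2 < posFun k (u.getD j (0, 0)).1 (pathHeight u j)

/-- Weight of the last step encoded by `m ∈ [0, k+1]` (increment `m - 1`) ending at height `y`. -/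
def stepWeight (k y m : ℕ) : ℕ := Nat.choose (k+1) m * (y + 2 - m)

/-- The finset of pre-diagrams of length `n` ending at height `y`. -/
def diagFinset (k : ℕ) : ℕ → ℕ → Finset (List (ℤ × ℕ))
  | 0, y => if y = 0 then {([] : List (ℤ × ℕ))} else ∅
  | n+1, y => (Finset.range (k+2)).biUnion fun m =>
      if m ≤ y + 1 then
        ((diagFinset k n (y+1-m)) ×ˢ Finset.range (stepWeight k y m)).image
          (fun ws => ws.1 ++ [((m:ℤ) - 1, ws.2)])
      else ∅

/-- The count of pre-diagrams. -/
def gcount (k : ℕ) : ℕ → ℕ → ℕ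
  | 0, y => if y = 0 then 1 else 0
  | n+1, y => ∑ m ∈ Finset.range (k+2),
      if m ≤ y + 1 then gcount k n (y+1-m) * stepWeight k y m else 0

lemma pathHeight_append_le (w v : List (ℤ × ℕ)) {j : ℕ} (h : j ≤ w.length) :
    pathHeight (w ++ v) j = pathHeight w j := by
  unfold pathHeight
  rw [List.take_append_of_le_length h]

lemma pathHeight_concat (w : List (ℤ × ℕ)) (p : ℤ × ℕ) :
    pathHeight (w ++ [p]) (w.length + 1) = pathHeight w w.length + p.1 := by
  unfold pathHeight
  rw [List.take_of_length_le (by simp), List.take_of_length_le (by simp), List.map_append]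
  simp

lemma posFun_eval {k y m : ℕ} (hm : m ≤ k + 1) (hmy : m ≤ y + 1) :
    posFun k ((m:ℤ) - 1) ((y + 1 - m : ℕ) : ℤ) = stepWeight k y m := by
  unfold posFun stepWeight
  rcases m with _ | _ | m
  · norm_num
  · norm_num [Nat.choose_one_right]
  · have h1 : ¬ ((m+2:ℕ):ℤ) - 1 = -1 := by push_cast; omega
    have h2 : ¬ ((m+2:ℕ):ℤ) - 1 = 0 := by push_cast; omega
    rw [if_neg h1, if_neg h2]
    have h3 : (((m+2:ℕ):ℤ) - 1).toNat = m + 1 := by push_cast; omega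
    rw [h3, Int.toNat_natCast]
    congr 1
    omega

lemma pre_concat {k n y m s : ℕ} {w : List (ℤ × ℕ)} (hm : m ≤ k + 1) (hmy : m ≤ y + 1)
    (hw : PreDiagram k n (y+1-m) w) (hs : s < stepWeight k y m) :
    PreDiagram k (n+1) y (w ++ [((m:ℤ) - 1, s)]) := by
  obtain ⟨hlen, hsteps, hnonneg, hend, hchoice⟩ := hw
  refine ⟨by simp [hlen], ?_, ?_, ?_, ?_⟩
  · intro p hp
    rcases List.mem_append.1 hp with h | h
    · exact hsteps p h
    · simp only [List.mem_singleton] at h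
      subst h
      rcases m with _ | _ | m
      · left; norm_num
      · right; left; norm_num
      · right; right
        constructor
        · simp only
          push_cast
          omega
        · simp only
          push_cast
          omega
  · intro j hj
    rcases Nat.lt_or_ge j (n+1) with h | h
    · rw [pathHeight_append_le w _ (by omega)]
      exact hnonneg j (by omega)
    · have hjn : j = n + 1 := by omega
      subst hjn
      rw [show n + 1 = w.length + 1 from by omega, pathHeight_concat, hlen, hend]
      simp only
      omega
  · rw [show n + 1 = w.length + 1 from by omega, pathHeight_concat, hlen, hend]
    simp only
    omega
  · intro j hj
    rcases Nat.lt_or_ge j n with h | h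
    · rw [List.getD_append _ _ _ _ (by omega), pathHeight_append_le w _ (by omega)]
      exact hchoice j h
    · have hjn : j = n := by omega
      subst hjn
      rw [List.getD_append_right _ _ _ _ (by omega), pathHeight_append_le w _ (by omega),
        hend, hlen]
      simpa [posFun_eval hm hmy] using hs

lemma pre_decomp {k n y : ℕ} {u : List (ℤ × ℕ)} (hu : PreDiagram k (n+1) y u) :
    ∃ m w s, m ≤ k + 1 ∧ m ≤ y + 1 ∧ PreDiagram k n (y+1-m) w ∧ s < stepWeight k y m ∧
      u = w ++ [((m:ℤ) - 1, s)] := by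
  obtain ⟨hlen, hsteps, hnonneg, hend, hchoice⟩ := hu
  have hne : u ≠ [] := by intro h; subst h; simp at hlen
  obtain ⟨w, p, rfl⟩ : ∃ w p, u = w ++ [p] :=
    ⟨u.dropLast, u.getLast hne, (List.dropLast_append_getLast hne).symm⟩
  have hwlen : w.length = n := by simpa using hlen
  have hstart : 0 ≤ pathHeight w n := by
    rw [← pathHeight_append_le w [p] (by omega)]
    exact hnonneg n (by omega)
  have hstep := hsteps p (by simp)
  have hd1 : -1 ≤ p.1 ∧ p.1 ≤ (k:ℤ) := by rcases hstep with h | h | h <;> omega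
  have hheights : pathHeight w n + p.1 = (y:ℤ) := by
    rw [show n+1 = w.length+1 from by omega, pathHeight_concat, hwlen] at hend
    exact hend
  set m : ℕ := (p.1 + 1).toNat with hmdef
  have hdm : (m:ℤ) = p.1 + 1 := Int.toNat_of_nonneg (by omega)
  have hm : m ≤ k + 1 := by omega
  have hmy : m ≤ y + 1 := by omega
  have hwh : pathHeight w n = ((y + 1 - m : ℕ) : ℤ) := by omega
  have hlast := hchoice n (by omega)
  rw [List.getD_append_right _ _ _ _ (by omega), pathHeight_append_le w _ (by omega), hwh]
    at hlast
  simp only [hwlen, Nat.sub_self, List.getD_cons_zero] at hlast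
  have hpd : p.1 = (m:ℤ) - 1 := by omega
  refine ⟨m, w, p.2, hm, hmy, ⟨hwlen, ?_, ?_, hwh, ?_⟩, ?_, ?_⟩
  · intro q hq; exact hsteps q (by simp [hq])
  · intro j hj
    rw [← pathHeight_append_le w [p] (by omega)]
    exact hnonneg j (by omega)
  · intro j hj
    have := hchoice j (by omega)
    rw [List.getD_append _ _ _ _ (by omega), pathHeight_append_le w _ (by omega)] at this
    exact this
  · rw [← posFun_eval hm hmy, ← hpd]
    exact hlast
  · rw [show ((m:ℤ) - 1, p.2) = p from Prod.ext hpd.symm rfl]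

lemma mem_diagFinset (k : ℕ) : ∀ (n y : ℕ) (u : List (ℤ × ℕ)),
    u ∈ diagFinset k n y ↔ PreDiagram k n y u := by
  intro n
  induction n with
  | zero =>
    intro y u
    simp only [diagFinset]
    constructor
    · intro h
      have hy : y = 0 ∧ u = [] := by
        by_cases h0 : y = 0
        · simp only [h0, if_pos, Finset.mem_singleton] at h; exact ⟨h0, h⟩
        · simp [h0] at h
      obtain ⟨rfl, rfl⟩ := hy
      exact ⟨rfl, by simp, fun j hj => by simp [pathHeight], by simp [pathHeight], by omega⟩
    · rintro ⟨hlen, -, -, hend, -⟩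
      have hu : u = [] := List.length_eq_zero_iff.1 hlen
      subst hu
      have hy : y = 0 := by
        have : (0:ℤ) = (y:ℤ) := by simpa [pathHeight] using hend
        omega
      simp [hy]
  | succ n ih =>
    intro y u
    simp only [diagFinset, Finset.mem_biUnion, Finset.mem_range]
    constructor
    · rintro ⟨m, hm, hmem⟩
      by_cases hmy : m ≤ y + 1
      · rw [if_pos hmy] at hmem
        simp only [Finset.mem_image, Finset.mem_product, Finset.mem_range, Prod.exists]
          at hmem
        obtain ⟨w, s, ⟨hw, hs⟩, rfl⟩ := hmem
        exact pre_concat (by omega) hmy ((ih _ _).1 hw) hs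
      · rw [if_neg hmy] at hmem; simp at hmem
    · intro hu
      obtain ⟨m, w, s, hm, hmy, hw, hs, rfl⟩ := pre_decomp hu
      refine ⟨m, by omega, ?_⟩
      rw [if_pos hmy]
      exact Finset.mem_image.2 ⟨(w, s),
        Finset.mem_product.2 ⟨(ih _ _).2 hw, Finset.mem_range.2 hs⟩, rfl⟩

lemma card_diagFinset (k : ℕ) : ∀ (n y : ℕ), (diagFinset k n y).card = gcount k n y := by
  intro n
  induction n with
  | zero => intro y; simp only [diagFinset, gcount]; split <;> simp
  | succ n ih =>
    intro y
    simp only [diagFinset, gcount]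
    rw [Finset.card_biUnion]
    · apply Finset.sum_congr rfl
      intro m _
      by_cases hmy : m ≤ y + 1
      · have hinj : Function.Injective
            (fun ws : List (ℤ×ℕ) × ℕ => ws.1 ++ [((m:ℤ)-1, ws.2)]) := by
          rintro ⟨w1, s1⟩ ⟨w2, s2⟩ h
          simp only at h
          obtain ⟨h1, h2⟩ := List.append_inj' h rfl
          simp only [List.cons.injEq, Prod.mk.injEq] at h2
          simp [h1, h2.1.2]
        rw [if_pos hmy, if_pos hmy, Finset.card_image_of_injective _ hinj,
          Finset.card_product, Finset.card_range, ih]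
      · rw [if_neg hmy, if_neg hmy]; simp
    · intro m1 h1 m2 h2 hne
      by_cases hm1 : m1 ≤ y+1
      · by_cases hm2 : m2 ≤ y+1
        · simp only [Function.onFun]
          rw [if_pos hm1, if_pos hm2, Finset.disjoint_left]
          rintro u hu1 hu2
          simp only [Finset.mem_image, Prod.exists] at hu1 hu2
          obtain ⟨w1, s1, -, rfl⟩ := hu1
          obtain ⟨w2, s2, -, h⟩ := hu2
          obtain ⟨-, h2⟩ := List.append_inj' h rfl
          simp only [List.cons.injEq, Prod.mk.injEq] at h2
          have : m1 = m2 := by omega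
          exact hne this
        · simp [Function.onFun, if_neg hm2]
      · simp [Function.onFun, if_neg hm1]

lemma gcount_eq (k : ℕ) : ∀ (n y : ℕ),
    gcount k n y = (∏ i ∈ Finset.range n, (k*i+1)) * Nat.choose (k*n+1) (y+1) := by
  intro n
  induction n with
  | zero =>
    intro y
    simp only [gcount]
    rcases y with _ | y
    · simp
    · have h0 : Nat.choose (k*0+1) (y+1+1) = 0 := Nat.choose_eq_zero_of_lt (by omega)
      rw [h0, if_neg (by omega), mul_zero]
  | succ n ih =>
    intro y
    simp only [gcount]
    have key : ∀ m ∈ Finset.range (k+2),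
        (if m ≤ y + 1 then gcount k n (y+1-m) * stepWeight k y m else 0)
        = (∏ i ∈ Finset.range n, (k*i+1)) * (k*n+1) *
          (if m ≤ y + 1 then Nat.choose (k+1) m * Nat.choose (k*n) (y+1-m) else 0) := by
      intro m _
      by_cases hmy : m ≤ y + 1
      · rw [if_pos hmy, if_pos hmy, ih]
        unfold stepWeight
        have h1 : y + 2 - m = (y+1-m) + 1 := by omega
        rw [h1]
        have h3 := Nat.add_one_mul_choose_eq (k*n) (y+1-m)
        calc (∏ i ∈ Finset.range n, (k*i+1)) * Nat.choose (k*n+1) (y+1-m+1) *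
              (Nat.choose (k+1) m * (y+1-m+1))
            = (Nat.choose (k*n+1) (y+1-m+1) * (y+1-m+1)) *
              ((∏ i ∈ Finset.range n, (k*i+1)) * Nat.choose (k+1) m) := by ring
          _ = ((k*n+1) * Nat.choose (k*n) (y+1-m)) *
              ((∏ i ∈ Finset.range n, (k*i+1)) * Nat.choose (k+1) m) := by rw [← h3]
          _ = _ := by ring
      · simp [hmy]
    rw [Finset.sum_congr rfl key, ← Finset.mul_sum]
    have hv : ∑ m ∈ Finset.range (k+2),
        (if m ≤ y + 1 then Nat.choose (k+1) m * Nat.choose (k*n) (y+1-m) else 0)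
        = Nat.choose (k+1 + k*n) (y+1) := by
      rw [Nat.add_choose_eq, Finset.Nat.sum_antidiagonal_eq_sum_range_succ_mk]
      have e1 : ∑ m ∈ Finset.range (k+2),
          (if m ≤ y + 1 then Nat.choose (k+1) m * Nat.choose (k*n) (y+1-m) else 0)
          = ∑ m ∈ Finset.range (k+y+4),
            (if m ≤ y + 1 then Nat.choose (k+1) m * Nat.choose (k*n) (y+1-m) else 0) := by
        apply Finset.sum_subset (Finset.range_subset_range.2 (by omega))
        intro x _ hx
        simp only [Finset.mem_range, not_lt] at hx
        split
        · rw [Nat.choose_eq_zero_of_lt (by omega), zero_mul]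
        · rfl
      have e2 : ∑ m ∈ Finset.range (y+1+1), Nat.choose (k+1) m * Nat.choose (k*n) (y+1-m)
          = ∑ m ∈ Finset.range (k+y+4),
            (if m ≤ y + 1 then Nat.choose (k+1) m * Nat.choose (k*n) (y+1-m) else 0) := by
        rw [← Finset.sum_subset (Finset.range_subset_range.2 (show y+1+1 ≤ k+y+4 by omega))
          (fun x _ hx => ?_)]
        · apply Finset.sum_congr rfl
          intro x hx
          simp only [Finset.mem_range] at hx
          rw [if_pos (by omega)]
        · simp only [Finset.mem_range, not_lt] at hx
          rw [if_neg (by omega)]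
      rw [e1, ← e2]
    rw [hv, show k + 1 + k*n = k*(n+1)+1 from by ring, Finset.prod_range_succ]

/-- The number of path diagrams of length `n` equals `∏_{ℓ=1}^{n+1}(k(ℓ-1)+1)`, the
number of `(k+1)`-ary increasing trees of size `n+1`. -/
theorem path_diagram_count (k n : ℕ) (hk : 1 ≤ k) :
    Nat.card {u : List (ℤ × ℕ) // IsPathDiagram k n u} =
      ∏ ℓ ∈ Finset.Icc 1 (n + 1), (k * (ℓ - 1) + 1) := by
  have h1 : ∀ u, IsPathDiagram k n u ↔ u ∈ diagFinset k n 0 := by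
    intro u
    rw [mem_diagFinset]
    unfold IsPathDiagram PreDiagram
    norm_num
  rw [Nat.card_congr (Equiv.subtypeEquivRight h1), Nat.card_eq_finsetCard,
    card_diagFinset, gcount_eq]
  rw [Nat.choose_one_right]
  have h2 : ∀ N : ℕ, ∏ ℓ ∈ Finset.Icc 1 (N + 1), (k * (ℓ - 1) + 1)
      = ∏ i ∈ Finset.range (N + 1), (k * i + 1) := by
    intro N
    induction N with
    | zero => simp
    | succ N ih =>
      rw [Finset.prod_Icc_succ_top (by omega), ih]
      simp [Finset.prod_range_succ]
  rw [h2, Finset.prod_range_succ]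
end

section
/- The number of path diagrams of length n with infinitely many rise step types a_ℓ = (1,ℓ) for all ℓ ≥ 1, fall step b = (1,-1), level step c = (1,0), and possibility function pos(a_{j,ℓ}) = pos(b_j) = pos(c_j) = j+1, equals (2n-1)!!, the number of plane-oriented recursive trees of size n+1. -/
/-- A path diagram of length `n` with infinitely many rise step types `a_ℓ = (1,ℓ)`,
`ℓ ≥ 1`, a fall step `b = (1,-1)` and a level step `c = (1,0)`: a nonnegative lattice
path from height `0` to height `0`, each step `j` equipped with a choice
`s_j < y_{j-1} + 1` where `y_{j-1}` is its starting height (the possibility function is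
`pos(a_{j,ℓ}) = pos(b_j) = pos(c_j) = j+1`). -/
def IsPortPathDiagram (n : ℕ) (u : List (ℤ × ℕ)) : Prop :=
  u.length = n ∧
  (∀ p ∈ u, -1 ≤ p.1) ∧
  (∀ j ≤ n, 0 ≤ pathHeight u j) ∧
  pathHeight u n = 0 ∧
  ∀ j < n, ((u.getD j (0, 0)).2 : ℤ) < pathHeight u j + 1

/-! ### Auxiliary counting functions -/

/-- Number of path-diagram tails of length `n` starting at height `h`. -/
def NN : ℕ → ℕ → ℕ
  | 0, h => if h = 0 then 1 else 0
  | n+1, h => ∑ k ∈ Finset.Icc (h-1) n, (h+1) * NN n k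

/-- Closed form for the tail sums `∑_{k ≥ h} NN n k`. -/
def TT (n h : ℕ) : ℕ :=
  Nat.doubleFactorial (2*(n-h)-1) * Nat.ascFactorial (2*(n-h)+1) (h+1)

lemma asc_bot (n k : ℕ) : n.ascFactorial (k+1) = n * (n+1).ascFactorial k := by
  rw [Nat.succ_ascFactorial]; rfl

lemma asc_one (n : ℕ) : n.ascFactorial 1 = n := by
  rw [show (1:ℕ) = 0 + 1 from rfl, Nat.ascFactorial_succ, Nat.ascFactorial_zero]; ring

lemma asc_two (n : ℕ) : n.ascFactorial 2 = (n+1) * n := by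
  rw [show (2:ℕ) = 1 + 1 from rfl, Nat.ascFactorial_succ, asc_one]

lemma key (n h : ℕ) (hh : h ≤ n) :
    TT (n+1) h = (h+1) * TT n (h-1) + TT (n+1) (h+1) := by
  rcases h with _ | h'
  · -- h = 0
    simp only [TT, Nat.sub_zero, Nat.sub_self, Nat.zero_sub]
    rw [show n + 1 - 1 = n by omega,
        show 2*(n+1) - 1 = 2*n + 1 by omega, show 2*(n+1) + 1 = 2*n + 3 by omega,
        show (0:ℕ) + 1 = 1 from rfl, show (0:ℕ) + 1 + 1 = 2 from rfl]
    rw [Nat.doubleFactorial_add_one]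
    rw [asc_one, asc_one, asc_two]
    ring
  · -- h = h'+1 ≤ n
    obtain ⟨m, hm⟩ : ∃ m, n = h' + 1 + m := ⟨n - (h'+1), by omega⟩
    subst hm
    simp only [TT]
    rw [show h'+1-1 = h' from rfl]
    rw [show h' + 1 + m + 1 - (h'+1) = m + 1 by omega,
        show h' + 1 + m + 1 - (h'+1+1) = m by omega,
        show h' + 1 + m - h' = m + 1 by omega]
    rw [show 2*(m+1) - 1 = 2*m + 1 by omega, show 2*(m+1) + 1 = 2*m + 3 by omega]
    rw [show h' + 1 + 1 + 1 = (h'+2)+1 from rfl]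
    rw [show Nat.ascFactorial (2*m+3) (h'+1+1) = (2*m+3+(h'+1)) * Nat.ascFactorial (2*m+3) (h'+1)
        from Nat.ascFactorial_succ]
    rw [show Nat.ascFactorial (2*m+1) ((h'+2)+1) = (2*m+1) * Nat.ascFactorial (2*m+2) (h'+2) from
        asc_bot (2*m+1) (h'+2),
        show Nat.ascFactorial (2*m+2) (h'+1+1) = (2*m+2) * Nat.ascFactorial (2*m+3) (h'+1) from
        asc_bot (2*m+2) (h'+1)]
    rw [show (2*m+1 : ℕ) = (2*m) + 1 from rfl, Nat.doubleFactorial_add_one]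
    ring

lemma sum_TT (n : ℕ) : ∀ d h, h + d = n + 1 →
    ∑ k ∈ Finset.Icc h (n+1), (k+1) * TT n (k-1) = TT (n+1) h := by
  intro d
  induction d with
  | zero =>
    intro h hd
    have : h = n + 1 := by omega
    subst this
    rw [Finset.Icc_self, Finset.sum_singleton]
    simp only [TT, Nat.sub_self, show n + 1 - (n+1-1) = 1 by omega,
      show n - (n+1-1) = 0 by omega]
    norm_num [Nat.doubleFactorial, show n+1-1+1 = n+1 by omega]
    rw [Nat.factorial_succ (n+1), Nat.factorial_succ n]
  | succ d ih =>
    intro h hd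
    have h1 : h ≤ n := by omega
    rw [← Finset.insert_Icc_add_one_left_eq_Icc (show h ≤ n+1 by omega)]
    rw [Finset.sum_insert (by simp)]
    rw [ih (h+1) (by omega)]
    rw [key n h h1]

lemma sum_NN (n : ℕ) : ∀ h ≤ n, ∑ k ∈ Finset.Icc h n, NN n k = TT n h := by
  induction n with
  | zero =>
    intro h hh
    interval_cases h
    simp [NN, TT, asc_one]
  | succ n ih =>
    intro h hh
    have step : ∀ k ∈ Finset.Icc h (n+1), NN (n+1) k = (k+1) * TT n (k-1) := by
      intro k hk
      simp only [Finset.mem_Icc] at hk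
      simp only [NN, ← Finset.mul_sum]
      rw [ih (k-1) (by omega)]
    rw [Finset.sum_congr rfl step, sum_TT n (n+1-h) h (by omega)]

lemma NN_zero (n : ℕ) : NN n 0 = Nat.doubleFactorial (2*n - 1) := by
  cases n with
  | zero => simp [NN]
  | succ n =>
    have : NN (n+1) 0 = ∑ k ∈ Finset.Icc 0 n, NN n k := by
      simp only [NN, Nat.zero_sub, Nat.zero_add]
      exact Finset.sum_congr rfl fun k _ => one_mul _
    rw [this, sum_NN n 0 (Nat.zero_le n)]
    simp only [TT, Nat.sub_zero]
    rw [asc_one, show 2*(n+1) - 1 = 2*n + 1 by omega, Nat.doubleFactorial_add_one]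
    ring

lemma prod_odd (n : ℕ) : ∏ ℓ ∈ Finset.Icc 1 n, (2 * ℓ - 1) = Nat.doubleFactorial (2*n - 1) := by
  induction n with
  | zero => simp
  | succ n ih =>
    rw [Finset.prod_Icc_succ_top (by omega), ih]
    rw [show 2*(n+1) - 1 = 2*n + 1 by omega, Nat.doubleFactorial_add_one]
    ring

/-! ### The finset of path diagrams -/

/-- The finset of path-diagram tails of length `n` starting at height `h`. -/
def DD : ℕ → ℕ → Finset (List (ℤ × ℕ))
  | 0, h => if h = 0 then {[]} else ∅
  | n+1, h => (Finset.Icc (h-1) n).biUnion fun k =>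
      (Finset.range (h+1) ×ˢ DD n k).image fun sv => (((k:ℤ) - (h:ℤ), sv.1)) :: sv.2

/-- Validity of a tail of length `n` from height `h`. -/
def Ok (n h : ℕ) (u : List (ℤ × ℕ)) : Prop :=
  u.length = n ∧
  (∀ p ∈ u, -1 ≤ p.1) ∧
  (∀ j ≤ n, 0 ≤ (h:ℤ) + pathHeight u j) ∧
  (h:ℤ) + pathHeight u n = 0 ∧
  ∀ j < n, ((u.getD j (0, 0)).2 : ℤ) < (h:ℤ) + pathHeight u j + 1

lemma pathHeight_zero (u : List (ℤ × ℕ)) : pathHeight u 0 = 0 := rfl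

lemma pathHeight_nil (j : ℕ) : pathHeight [] j = 0 := by simp [pathHeight]

lemma pathHeight_cons (p : ℤ × ℕ) (v : List (ℤ × ℕ)) (j : ℕ) :
    pathHeight (p :: v) (j+1) = p.1 + pathHeight v j := by
  simp [pathHeight]

lemma pathHeight_lb (v : List (ℤ × ℕ)) (hv : ∀ p ∈ v, -1 ≤ p.1) :
    ∀ j : ℕ, -(j:ℤ) ≤ pathHeight v j := by
  induction v with
  | nil => intro j; rw [pathHeight_nil]; omega
  | cons p w ih =>
    intro j
    cases j with
    | zero => simp [pathHeight_zero]
    | succ j =>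
      rw [pathHeight_cons]
      have h1 : -1 ≤ p.1 := hv p (by simp)
      have h2 : -(j:ℤ) ≤ pathHeight w j := ih (fun q hq => hv q (by simp [hq])) j
      push_cast
      omega

lemma mem_DD : ∀ (n h : ℕ) (u : List (ℤ × ℕ)), u ∈ DD n h ↔ Ok n h u := by
  intro n
  induction n with
  | zero =>
    intro h u
    by_cases hh : h = 0
    · subst hh
      rw [show DD 0 0 = {[]} from rfl, Finset.mem_singleton]
      constructor
      · rintro rfl
        refine ⟨rfl, by simp, ?_, by simp [pathHeight_nil], by omega⟩
        intro j _; simp [pathHeight_nil]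
      · rintro ⟨hlen, -, -, -, -⟩
        exact List.length_eq_zero_iff.mp hlen
    · simp only [DD, if_neg hh, Finset.notMem_empty, false_iff, Ok]
      rintro ⟨hlen, -, -, hfin, -⟩
      have hu : u = [] := List.length_eq_zero_iff.mp hlen
      subst hu
      rw [pathHeight_nil] at hfin
      exact hh (by exact_mod_cast by omega)
  | succ n ih =>
    intro h u
    simp only [DD, Finset.mem_biUnion, Finset.mem_image, Finset.mem_product, Finset.mem_Icc,
      Finset.mem_range, Prod.exists]
    constructor
    · rintro ⟨k, ⟨hk1, hk2⟩, s, v, ⟨⟨hs, hv⟩, rfl⟩⟩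
      obtain ⟨hlen, hsteps, hnn, hfin, hch⟩ := (ih k v).mp hv
      have hk1' : (h:ℤ) - 1 ≤ (k:ℤ) := by omega
      refine ⟨by simp [hlen], ?_, ?_, ?_, ?_⟩
      · intro p hp
        rcases List.mem_cons.mp hp with rfl | hp
        · simp only; omega
        · exact hsteps p hp
      · intro j hj
        cases j with
        | zero => rw [pathHeight_zero]; omega
        | succ j =>
          rw [pathHeight_cons]
          have := hnn j (by omega)
          simp only at *
          omega
      · rw [show n + 1 = v.length + 1 by omega, pathHeight_cons,
          show v.length = n by omega]
        simp only
        omega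
      · intro j hj
        cases j with
        | zero =>
          simp only [List.getD_cons_zero, pathHeight_zero]
          omega
        | succ j =>
          simp only [List.getD_cons_succ]
          rw [pathHeight_cons]
          have := hch j (by omega)
          simp only
          omega
    · rintro ⟨hlen, hsteps, hnn, hfin, hch⟩
      obtain ⟨p, v, rfl⟩ : ∃ p v, u = p :: v := by
        cases u with
        | nil => simp at hlen
        | cons p v => exact ⟨p, v, rfl⟩
      obtain ⟨δ, s⟩ := p
      have hlen' : v.length = n := by simpa using hlen
      have hδ : -1 ≤ δ := hsteps (δ, s) List.mem_cons_self
      have h1 : 0 ≤ (h:ℤ) + δ := by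
        have := hnn 1 (by omega)
        rwa [pathHeight_cons, pathHeight_zero, add_zero] at this
      set k : ℕ := ((h:ℤ) + δ).toNat with hk
      have hkZ : (k:ℤ) = (h:ℤ) + δ := Int.toNat_of_nonneg h1
      have hvsteps : ∀ q ∈ v, -1 ≤ q.1 := fun q hq => hsteps q (List.mem_cons_of_mem _ hq)
      have hvfin : (k:ℤ) + pathHeight v v.length = 0 := by
        have := hfin
        rw [show n + 1 = v.length + 1 by omega, pathHeight_cons] at this
        simp only at this
        omega
      have hkn : k ≤ n := by
        have hlb := pathHeight_lb v hvsteps v.length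
        omega
      have hkh : h - 1 ≤ k := by omega
      refine ⟨k, ⟨hkh, hkn⟩, s, v, ⟨⟨?_, ?_⟩, ?_⟩⟩
      · have := hch 0 (by omega)
        simp only [List.getD_cons_zero, pathHeight_zero] at this
        omega
      · refine (ih k v).mpr ⟨hlen', hvsteps, ?_, ?_, ?_⟩
        · intro j hj
          have := hnn (j+1) (by omega)
          rw [pathHeight_cons] at this
          simp only at this
          omega
        · rw [show (n:ℕ) = v.length by omega]
          exact hvfin
        · intro j hj
          have := hch (j+1) (by omega)
          simp only [List.getD_cons_succ] at this
          rw [pathHeight_cons] at this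
          simp only at this
          omega
      · have : (k:ℤ) - (h:ℤ) = δ := by omega
        rw [this]

lemma card_DD : ∀ n h, (DD n h).card = NN n h := by
  intro n
  induction n with
  | zero => intro h; by_cases hh : h = 0 <;> simp [DD, NN, hh]
  | succ n ih =>
    intro h
    rw [show DD (n+1) h = (Finset.Icc (h-1) n).biUnion fun k =>
      (Finset.range (h+1) ×ˢ DD n k).image fun sv => (((k:ℤ) - (h:ℤ), sv.1)) :: sv.2 from rfl]
    rw [Finset.card_biUnion]
    · refine Finset.sum_congr rfl fun k _ => ?_
      rw [Finset.card_image_of_injective _ (fun a b hab => by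
        simp only [List.cons.injEq, Prod.mk.injEq] at hab
        exact Prod.ext hab.1.2 hab.2)]
      rw [Finset.card_product, Finset.card_range, ih k]
    · intro k _ k' _ hkk
      rw [Function.onFun, Finset.disjoint_left]
      rintro x hx hx'
      simp only [Finset.mem_image, Prod.exists] at hx hx'
      obtain ⟨s, v, -, rfl⟩ := hx
      obtain ⟨s', v', -, he⟩ := hx'
      simp only [List.cons.injEq, Prod.mk.injEq] at he
      exact hkk (by omega)

/-- The number of such path diagrams of length `n` is `(2n-1)!! = ∏_{ℓ=1}^{n}(2ℓ-1)`,
the number of plane-oriented recursive trees of size `n+1`. -/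
theorem port_path_diagram_count (n : ℕ) :
    Nat.card {u : List (ℤ × ℕ) // IsPortPathDiagram n u} =
      ∏ ℓ ∈ Finset.Icc 1 n, (2 * ℓ - 1) := by
  have hiff : ∀ u, IsPortPathDiagram n u ↔ u ∈ DD n 0 := by
    intro u
    rw [mem_DD]
    unfold IsPortPathDiagram Ok
    simp only [Nat.cast_zero, zero_add]
  calc Nat.card {u : List (ℤ × ℕ) // IsPortPathDiagram n u}
      = Nat.card {u : List (ℤ × ℕ) // u ∈ DD n 0} :=
        Nat.card_congr (Equiv.subtypeEquivRight hiff)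
    _ = (DD n 0).card := Nat.card_eq_finsetCard _
    _ = NN n 0 := card_DD n 0
    _ = Nat.doubleFactorial (2*n - 1) := NN_zero n
    _ = ∏ ℓ ∈ Finset.Icc 1 n, (2 * ℓ - 1) := (prod_odd n).symm
end

section
/- If each entry of a k-Stirling permutation σ of size n is assigned its local type in {0,1}^{k+1}, then the total number of 1's among all local types of σ equals n - 1. -/
/-- The value `σ_p` of the 1-indexed word `w` with boundary convention
`σ_0 = σ_{kn+1} = -∞` (represented by `0`, which is smaller than every letter). -/
def bval (w : List ℕ) (p : ℕ) : ℕ :=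
  if p = 0 then 0 else w.getD (p - 1) 0

/-- The increasing list `j_{i,1} < ⋯ < j_{i,k}` of (1-indexed) positions of letter `i`. -/
def stirPos (k n : ℕ) (w : List ℕ) (i : ℕ) : List ℕ :=
  ((List.range (k * n)).filter fun p => w.getD p 0 = i).map (· + 1)

/-- The local type `L_i(σ) = ℓ_{i,1}⋯ℓ_{i,k+1} ∈ {0,1}^{k+1}` of the letter `i`:
`ℓ_{i,1} = 1` iff `σ_{j_{i,1}-1} > σ_{j_{i,1}}`, `ℓ_{i,k+1} = 1` iff
`σ_{j_{i,k}} < σ_{j_{i,k}+1}`, and `ℓ_{i,h} = 1` iff `σ_{j_{i,h}-1} ≠ σ_{j_{i,h}}`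
for `2 ≤ h ≤ k`. -/
def localType (k n : ℕ) (w : List ℕ) (i : ℕ) : Fin (k + 1) → Bool := fun h =>
  let J := stirPos k n w i
  if (h : ℕ) = 0 then decide (i < bval w (J.getD 0 0 - 1))
  else if (h : ℕ) = k then decide (i < bval w (J.getD (k - 1) 0 + 1))
  else decide (bval w (J.getD (h : ℕ) 0 - 1) ≠ i)



/-- auxiliary: the larger letter at gap `g` (right value if ascent, else left value) -/
def gapLetter (w : List ℕ) (g : ℕ) : ℕ :=
  if bval w g < bval w (g + 1) then bval w (g + 1) else bval w g

lemma count_filter_range (l : List ℕ) (a : ℕ) :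
    ((List.range l.length).filter fun p => l.getD p 0 = a).length = l.count a := by
  induction l with
  | nil => simp
  | cons x t ih =>
    rw [List.length_cons, List.range_succ_eq_map]
    simp only [List.filter_cons, List.getD_cons_zero]
    rw [List.filter_map]
    have h2 : List.filter ((fun p => decide ((x :: t).getD p 0 = a)) ∘ Nat.succ) (List.range t.length)
        = List.filter (fun p => decide (t.getD p 0 = a)) (List.range t.length) := by
      apply List.filter_congr
      intro p _; simp
    rw [h2, List.count_cons]
    simp only [List.getD_eq_getElem?_getD] at ih
    by_cases hx : x = a
    · simp [hx, ih]
    · simp [hx, ih, Ne.symm hx]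

lemma mem_stirPos {k n : ℕ} {w : List ℕ} {i p : ℕ} :
    p ∈ stirPos k n w i ↔ 1 ≤ p ∧ p ≤ k * n ∧ bval w p = i := by
  unfold stirPos
  simp only [List.mem_map, List.mem_filter, List.mem_range, decide_eq_true_eq]
  constructor
  · rintro ⟨q, ⟨hq, hqi⟩, rfl⟩
    refine ⟨by omega, by omega, ?_⟩
    unfold bval
    rw [if_neg (by omega)]
    simpa using hqi
  · rintro ⟨h1, h2, h3⟩
    refine ⟨p - 1, ⟨by omega, ?_⟩, by omega⟩
    unfold bval at h3
    rw [if_neg (by omega)] at h3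
    exact h3

lemma stirPos_pairwise (k n : ℕ) (w : List ℕ) (i : ℕ) :
    List.Pairwise (· < ·) (stirPos k n w i) := by
  unfold stirPos
  exact List.Pairwise.map _ (fun a b h => Nat.add_lt_add_right h 1)
    (List.Pairwise.filter _ List.pairwise_lt_range)

lemma stirPos_getD_lt {k n : ℕ} {w : List ℕ} {i a b : ℕ} (hab : a < b)
    (hb : b < (stirPos k n w i).length) :
    (stirPos k n w i).getD a 0 < (stirPos k n w i).getD b 0 := by
  rw [List.getD_eq_getElem _ _ (by omega), List.getD_eq_getElem _ _ hb]
  exact List.pairwise_iff_get.mp (stirPos_pairwise k n w i) ⟨a, by omega⟩ ⟨b, hb⟩ hab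

lemma stirPos_getD_mem {k n : ℕ} {w : List ℕ} {i m : ℕ} (hm : m < (stirPos k n w i).length) :
    (stirPos k n w i).getD m 0 ∈ stirPos k n w i := by
  rw [List.getD_eq_getElem _ _ hm]
  exact List.getElem_mem hm

lemma stirPos_exists_idx {k n : ℕ} {w : List ℕ} {i p : ℕ} (hp : p ∈ stirPos k n w i) :
    ∃ m, m < (stirPos k n w i).length ∧ (stirPos k n w i).getD m 0 = p := by
  obtain ⟨m, hm⟩ := List.mem_iff_get.mp hp
  exact ⟨m.1, m.isLt, by rw [List.getD_eq_getElem _ _ m.isLt]; exact hm⟩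

lemma mem_of_word {k n : ℕ} (hk : 1 ≤ k) (hn : 1 ≤ n) {w : List ℕ}
    (hw : IsStirlingWord k n w) : ∀ x ∈ w, 1 ≤ x ∧ x ≤ n := by
  obtain ⟨hlen, hcnt, -⟩ := hw
  intro x hx
  by_contra hxn
  push_neg at hxn
  have hxicc : x ∉ Finset.Icc 1 n := by
    simp only [Finset.mem_Icc, not_and_or, not_le]
    by_cases h1 : 1 ≤ x
    · right; omega
    · left; omega
  have hsum : ∑ a ∈ w.toFinset, w.count a = w.length := by
    have := Multiset.toFinset_sum_count_eq (w : Multiset ℕ)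
    simpa using this
  have h1 : ∑ a ∈ Finset.Icc 1 n, w.count a = w.length := by
    rw [Finset.sum_congr rfl (fun i hi => hcnt i (Finset.mem_Icc.mp hi).1 (Finset.mem_Icc.mp hi).2)]
    rw [Finset.sum_const, Nat.card_Icc, smul_eq_mul, hlen, Nat.add_sub_cancel]
    ring
  have h2 : ∑ a ∈ Finset.Icc 1 n ∩ w.toFinset, w.count a = ∑ a ∈ Finset.Icc 1 n, w.count a := by
    apply Finset.sum_subset Finset.inter_subset_left
    intro a ha hna
    rw [List.count_eq_zero]
    intro hmm
    exact hna (Finset.mem_inter.mpr ⟨ha, List.mem_toFinset.mpr hmm⟩)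
  have h3 : ∑ a ∈ Finset.Icc 1 n ∩ w.toFinset, w.count a < ∑ a ∈ w.toFinset, w.count a := by
    apply Finset.sum_lt_sum_of_subset Finset.inter_subset_right (List.mem_toFinset.mpr hx)
    · intro hmem2
      exact hxicc (Finset.mem_inter.mp hmem2).1
    · exact List.count_pos_iff.mpr hx
    · intro j _ _; exact Nat.zero_le _
  omega

def bitVal (k n : ℕ) (w : List ℕ) (i : ℕ) (m : ℕ) : ℕ :=
  if m = 0 then (if i < bval w ((stirPos k n w i).getD 0 0 - 1) then 1 else 0)
  else if m = k then (if i < bval w ((stirPos k n w i).getD (k - 1) 0 + 1) then 1 else 0)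
  else (if bval w ((stirPos k n w i).getD m 0 - 1) ≠ i then 1 else 0)






lemma bit_eq (k n : ℕ) (w : List ℕ) (i : ℕ) (h : Fin (k + 1)) :
    (if localType k n w i h then (1 : ℕ) else 0) = bitVal k n w i h.val := by
  unfold localType bitVal
  by_cases h0 : (h : ℕ) = 0
  · simp [h0]
  · by_cases hkk : (h : ℕ) = k
    · have hk0 : ¬(k = 0) := by omega
      simp [h0, hkk, hk0]
    · simp [h0, hkk]

lemma bits_sum (k n : ℕ) (hk : 1 ≤ k) (w : List ℕ) (i : ℕ) :
    (∑ h : Fin (k + 1), (if localType k n w i h then (1 : ℕ) else 0))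
      = (if i < bval w ((stirPos k n w i).getD 0 0 - 1) then 1 else 0)
        + (∑ m ∈ Finset.Ico 1 k,
            (if bval w ((stirPos k n w i).getD m 0 - 1) ≠ i then 1 else 0))
        + (if i < bval w ((stirPos k n w i).getD (k - 1) 0 + 1) then 1 else 0) := by
  rw [Finset.sum_congr rfl (fun h _ => bit_eq k n w i h),
    Fin.sum_univ_eq_sum_range (bitVal k n w i) (k + 1)]
  have e1 : ∑ m ∈ Finset.range (k + 1), bitVal k n w i m
      = ∑ m ∈ Finset.Ico 0 1, bitVal k n w i m + ∑ m ∈ Finset.Ico 1 k, bitVal k n w i m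
        + ∑ m ∈ Finset.Ico k (k + 1), bitVal k n w i m := by
    rw [Finset.sum_Ico_consecutive (bitVal k n w i) (Nat.zero_le 1) hk,
      Finset.sum_Ico_consecutive (bitVal k n w i) (Nat.zero_le k) (by omega),
      Finset.range_eq_Ico]
  rw [e1, ← Finset.range_eq_Ico, Finset.sum_range_one,
    Finset.sum_Ico_succ_top (le_refl k), Finset.Ico_self, Finset.sum_empty, zero_add]
  have h0 : bitVal k n w i 0 = if i < bval w ((stirPos k n w i).getD 0 0 - 1) then 1 else 0 := by
    unfold bitVal; rw [if_pos rfl]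
  have hlast : bitVal k n w i k = if i < bval w ((stirPos k n w i).getD (k - 1) 0 + 1)
      then 1 else 0 := by
    unfold bitVal; rw [if_neg (by omega), if_pos rfl]
  rw [h0, hlast]
  congr 1
  congr 1
  apply Finset.sum_congr rfl
  intro m hm
  rw [Finset.mem_Ico] at hm
  unfold bitVal
  rw [if_neg (by omega), if_neg (by omega)]

lemma key_letter (k n : ℕ) (hk : 1 ≤ k) (hn : 1 ≤ n) (w : List ℕ)
    (hw : IsStirlingWord k n w) (i : ℕ) (hi1 : 1 ≤ i) (hi2 : i ≤ n) :
    (∑ h : Fin (k + 1), (if localType k n w i h then (1 : ℕ) else 0))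
      + ((Finset.range (k * n + 1)).filter (fun g => gapLetter w g = i)).card = k + 1 := by
  have hlen := hw.1
  have hv0 : bval w 0 = 0 := by simp [bval]
  have hvout : ∀ p, k * n < p → bval w p = 0 := by
    intro p hp
    unfold bval
    rw [if_neg (by omega)]
    exact List.getD_eq_default _ _ (by omega)
  have hbeq : ∀ p, 1 ≤ p → bval w p = w.getD (p - 1) 0 := by
    intro p hp; unfold bval; rw [if_neg (by omega)]
  have hSt : ∀ p q r, 1 ≤ p → p < q → q < r → r ≤ k * n →
      bval w p = bval w r → bval w p ≤ bval w q := by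
    intro p q r h1 h2 h3 h4 h5
    rw [hbeq p h1, hbeq q (by omega)]
    rw [hbeq p h1, hbeq r (by omega)] at h5
    exact hw.2.2 (p - 1) (q - 1) (r - 1) (by omega) (by omega) (by omega) h5
  set J := stirPos k n w i with hJdef
  have hJlen : J.length = k := by
    rw [hJdef]
    unfold stirPos
    rw [List.length_map]
    have h := count_filter_range w i
    rw [hlen] at h
    rw [h]
    exact hw.2.1 i hi1 hi2
  have hmemJ : ∀ p, p ∈ J ↔ 1 ≤ p ∧ p ≤ k * n ∧ bval w p = i := fun p => mem_stirPos
  have hvalJ : ∀ p, bval w p = i → p ∈ J := by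
    intro p hp
    have hp0 : p ≠ 0 := by intro h; rw [h, hv0] at hp; omega
    have hpN : p ≤ k * n := by
      by_contra h
      rw [hvout p (by omega)] at hp
      omega
    exact (hmemJ p).mpr ⟨by omega, hpN, hp⟩
  have hlt : ∀ a b, a < b → b < k → J.getD a 0 < J.getD b 0 := by
    intro a b hab hbk
    exact stirPos_getD_lt hab (by rw [hJlen]; exact hbk)
  have hgetmem : ∀ m, m < k → J.getD m 0 ∈ J := by
    intro m hm
    exact stirPos_getD_mem (by rw [hJlen]; exact hm)
  have hidx : ∀ p ∈ J, ∃ m, m < k ∧ J.getD m 0 = p := by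
    intro p hp
    obtain ⟨m, hm, he⟩ := stirPos_exists_idx hp
    exact ⟨m, by rw [← hJlen]; exact hm, he⟩
  set f := J.getD 0 0 with hfdef
  set l := J.getD (k - 1) 0 with hldef
  have hfJ : f ∈ J := hgetmem 0 hk
  have hlJ : l ∈ J := hgetmem (k - 1) (by omega)
  have hfmin : ∀ p ∈ J, f ≤ p := by
    intro p hp
    obtain ⟨m, hm, rfl⟩ := hidx p hp
    rcases Nat.eq_zero_or_pos m with h | h
    · subst h; exact le_rfl
    · exact le_of_lt (hlt 0 m h hm)
  have hlmax : ∀ p ∈ J, p ≤ l := by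
    intro p hp
    obtain ⟨m, hm, rfl⟩ := hidx p hp
    rcases Nat.lt_or_ge m (k - 1) with h | h
    · exact le_of_lt (hlt m (k - 1) h (by omega))
    · have : m = k - 1 := by omega
      subst this; exact le_rfl
  obtain ⟨hf1, hfN, hvf⟩ := (hmemJ f).mp hfJ
  obtain ⟨hl1, hlN, hvl⟩ := (hmemJ l).mp hlJ
  have hnef : bval w (f - 1) ≠ i := by
    intro h
    have := hfmin _ (hvalJ _ h)
    omega
  have hnel : bval w (l + 1) ≠ i := by
    intro h
    have := hlmax _ (hvalJ _ h)
    omega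
  -- the three gap sets
  have hA : (Finset.range (k * n + 1)).filter
        (fun g => bval w (g + 1) = i ∧ bval w g < bval w (g + 1))
      = if bval w (f - 1) < i then {f - 1} else ∅ := by
    ext g
    simp only [Finset.mem_filter, Finset.mem_range]
    constructor
    · rintro ⟨hg, hgi, hlt'⟩
      have hgJ := hvalJ _ hgi
      obtain ⟨-, hgN2, -⟩ := (hmemJ _).mp hgJ
      have hge := hfmin _ hgJ
      have hgf : g + 1 = f := by
        by_contra hne
        have hfg : f < g := by
          rcases Nat.lt_or_ge f g with h | h
          · exact h
          · exfalso
            have : f = g := by omega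
            subst this
            omega
        have hcontra := hSt f g (g + 1) hf1 hfg (by omega) hgN2 (by rw [hvf, hgi])
        omega
      have hc : bval w (f - 1) < i := by
        have : g = f - 1 := by omega
        subst this
        rw [hgf] at hgi hlt'
        omega
      rw [if_pos hc, Finset.mem_singleton]
      omega
    · intro hg
      by_cases hc : bval w (f - 1) < i
      · rw [if_pos hc, Finset.mem_singleton] at hg
        subst hg
        have hf1' : f - 1 + 1 = f := by omega
        refine ⟨by omega, ?_, ?_⟩ <;> rw [hf1'] <;> omega
      · rw [if_neg hc] at hg
        simp at hg
  have hD : (Finset.range (k * n + 1)).filter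
        (fun g => bval w g = i ∧ bval w (g + 1) < bval w g)
      = if bval w (l + 1) < i then {l} else ∅ := by
    ext g
    simp only [Finset.mem_filter, Finset.mem_range]
    constructor
    · rintro ⟨hg, hgi, hlt'⟩
      have hgJ := hvalJ _ hgi
      obtain ⟨hg1, hgN2, -⟩ := (hmemJ _).mp hgJ
      have hgle := hlmax _ hgJ
      have hgl : g = l := by
        by_contra hne
        have hgl2 : g + 1 ≤ l := by omega
        rcases Nat.lt_or_ge (g + 1) l with h | h
        · have hcontra := hSt g (g + 1) l hg1 (by omega) h hlN (by rw [hgi, hvl])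
          omega
        · have : g + 1 = l := by omega
          rw [this, hvl] at hlt'
          omega
      subst hgl
      rw [if_pos (by omega), Finset.mem_singleton]
    · intro hg
      by_cases hc : bval w (l + 1) < i
      · rw [if_pos hc, Finset.mem_singleton] at hg
        subst hg
        exact ⟨by omega, hvl, by omega⟩
      · rw [if_neg hc] at hg
        simp at hg
  have hE : (Finset.range (k * n + 1)).filter
        (fun g => bval w g = i ∧ bval w g = bval w (g + 1))
      = ((Finset.Ico 1 k).filter (fun m => bval w (J.getD m 0 - 1) = i)).image
          (fun m => J.getD m 0 - 1) := by
    ext g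
    simp only [Finset.mem_filter, Finset.mem_range, Finset.mem_image, Finset.mem_Ico]
    constructor
    · rintro ⟨hg, hgi, heq⟩
      have hvg1 : bval w (g + 1) = i := heq.symm.trans hgi
      obtain ⟨m, hmk, hme⟩ := hidx _ (hvalJ _ hvg1)
      have hm1 : 1 ≤ m := by
        rcases Nat.eq_zero_or_pos m with h | h
        · exfalso
          subst h
          have := hfmin _ (hvalJ _ hgi)
          rw [← hfdef] at hme
          omega
        · exact h
      have hsub : J.getD m 0 - 1 = g := by omega
      exact ⟨m, ⟨⟨hm1, hmk⟩, by rw [hsub]; exact hgi⟩, hsub⟩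
    · rintro ⟨m, ⟨⟨hm1, hmk⟩, hmi⟩, hg'⟩
      obtain ⟨hp1, hpN, hpv⟩ := (hmemJ _).mp (hgetmem m hmk)
      subst hg'
      refine ⟨by omega, hmi, ?_⟩
      have he : J.getD m 0 - 1 + 1 = J.getD m 0 := by omega
      rw [he, hpv, hmi]
  have hEcard : ((Finset.range (k * n + 1)).filter
        (fun g => bval w g = i ∧ bval w g = bval w (g + 1))).card
      = ((Finset.Ico 1 k).filter (fun m => bval w (J.getD m 0 - 1) = i)).card := by
    rw [hE]
    apply Finset.card_image_of_injOn
    intro a ha b hb hab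
    simp only [Finset.coe_filter, Set.mem_setOf_eq, Finset.mem_Ico] at ha hb
    change J.getD a 0 - 1 = J.getD b 0 - 1 at hab
    obtain ⟨ha1, -, -⟩ := (hmemJ _).mp (hgetmem a ha.1.2)
    obtain ⟨hb1, -, -⟩ := (hmemJ _).mp (hgetmem b hb.1.2)
    rcases lt_trichotomy a b with h | h | h
    · have := hlt a b h hb.1.2; omega
    · exact h
    · have := hlt b a h ha.1.2; omega
  -- fiber split
  have hsplit : ((Finset.range (k * n + 1)).filter (fun g => gapLetter w g = i)).card
      = ((Finset.range (k * n + 1)).filter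
          (fun g => bval w (g + 1) = i ∧ bval w g < bval w (g + 1))).card
        + ((Finset.range (k * n + 1)).filter
          (fun g => bval w g = i ∧ bval w (g + 1) < bval w g)).card
        + ((Finset.range (k * n + 1)).filter
          (fun g => bval w g = i ∧ bval w g = bval w (g + 1))).card := by
    have hunion : (Finset.range (k * n + 1)).filter (fun g => gapLetter w g = i)
        = ((Finset.range (k * n + 1)).filter
            (fun g => bval w (g + 1) = i ∧ bval w g < bval w (g + 1))
          ∪ (Finset.range (k * n + 1)).filter
            (fun g => bval w g = i ∧ bval w (g + 1) < bval w g))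
          ∪ (Finset.range (k * n + 1)).filter
            (fun g => bval w g = i ∧ bval w g = bval w (g + 1)) := by
      ext g
      simp only [Finset.mem_filter, Finset.mem_union, Finset.mem_range]
      unfold gapLetter
      constructor
      · rintro ⟨hg, hP⟩
        by_cases hxy : bval w g < bval w (g + 1)
        · rw [if_pos hxy] at hP
          exact Or.inl (Or.inl ⟨hg, hP, hxy⟩)
        · rw [if_neg hxy] at hP
          push_neg at hxy
          rcases Nat.lt_or_ge (bval w (g + 1)) (bval w g) with h | h
          · exact Or.inl (Or.inr ⟨hg, hP, h⟩)
          · exact Or.inr ⟨hg, hP, by omega⟩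
      · rintro ((⟨hg, h1, h2⟩ | ⟨hg, h1, h2⟩) | ⟨hg, h1, h2⟩)
        · exact ⟨hg, by rw [if_pos h2]; exact h1⟩
        · exact ⟨hg, by rw [if_neg (by omega)]; exact h1⟩
        · exact ⟨hg, by rw [if_neg (by omega)]; exact h1⟩
    have dAD : Disjoint ((Finset.range (k * n + 1)).filter
          (fun g => bval w (g + 1) = i ∧ bval w g < bval w (g + 1)))
        ((Finset.range (k * n + 1)).filter
          (fun g => bval w g = i ∧ bval w (g + 1) < bval w g)) := by
      rw [Finset.disjoint_left]
      intro g hga hgd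
      simp only [Finset.mem_filter] at hga hgd
      omega
    have dADE : Disjoint ((Finset.range (k * n + 1)).filter
            (fun g => bval w (g + 1) = i ∧ bval w g < bval w (g + 1))
          ∪ (Finset.range (k * n + 1)).filter
            (fun g => bval w g = i ∧ bval w (g + 1) < bval w g))
        ((Finset.range (k * n + 1)).filter
          (fun g => bval w g = i ∧ bval w g = bval w (g + 1))) := by
      rw [Finset.disjoint_left]
      intro g hga hge
      simp only [Finset.mem_union, Finset.mem_filter] at hga hge
      rcases hga with h | h <;> omega
    rw [hunion, Finset.card_union_of_disjoint dADE, Finset.card_union_of_disjoint dAD]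
  have hcA : ((Finset.range (k * n + 1)).filter
        (fun g => bval w (g + 1) = i ∧ bval w g < bval w (g + 1))).card
      = if bval w (f - 1) < i then 1 else 0 := by
    rw [hA]; split_ifs <;> simp
  have hcD : ((Finset.range (k * n + 1)).filter
        (fun g => bval w g = i ∧ bval w (g + 1) < bval w g)).card
      = if bval w (l + 1) < i then 1 else 0 := by
    rw [hD]; split_ifs <;> simp
  have hmid : (∑ m ∈ Finset.Ico 1 k, (if bval w (J.getD m 0 - 1) ≠ i then (1 : ℕ) else 0))
      + ((Finset.Ico 1 k).filter (fun m => bval w (J.getD m 0 - 1) = i)).card = k - 1 := by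
    rw [← Finset.card_filter]
    rw [add_comm]
    have := Finset.card_filter_add_card_filter_not
      (s := Finset.Ico 1 k) (p := fun m => bval w (J.getD m 0 - 1) = i)
    rw [Nat.card_Ico] at this
    exact this
  rw [bits_sum k n hk w i, hsplit, hcA, hcD, hEcard, ← hJdef, ← hfdef, ← hldef]
  have hk1 : 1 ≤ k := hk
  split_ifs <;> omega

/-- The total number of `1`s among all local types of a `k`-Stirling permutation of
size `n` equals `n - 1`. -/
theorem local_types_ones (k n : ℕ) (hk : 1 ≤ k) (hn : 1 ≤ n) (w : List ℕ)
    (hw : IsStirlingWord k n w) :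
    (∑ i ∈ Finset.Icc 1 n, ∑ h : Fin (k + 1),
        (if localType k n w i h then 1 else 0)) = n - 1 := by
  have hlen := hw.1
  have hv0 : bval w 0 = 0 := by simp [bval]
  have hvout : ∀ p, k * n < p → bval w p = 0 := by
    intro p hp
    unfold bval
    rw [if_neg (by omega)]
    exact List.getD_eq_default _ _ (by omega)
  have hvrange : ∀ p, 1 ≤ p → p ≤ k * n → 1 ≤ bval w p ∧ bval w p ≤ n := by
    intro p h1 h2
    have hp : p - 1 < w.length := by omega
    have : bval w p = w[p-1] := by
      unfold bval
      rw [if_neg (by omega)]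
      exact List.getD_eq_getElem _ _ hp
    rw [this]
    exact mem_of_word hk hn hw _ (List.getElem_mem hp)
  have key : ∀ i ∈ Finset.Icc 1 n,
      (∑ h : Fin (k + 1), (if localType k n w i h then 1 else 0))
        + ((Finset.range (k * n + 1)).filter (fun g => gapLetter w g = i)).card = k + 1 := by
    intro i hi
    obtain ⟨hi1, hi2⟩ := Finset.mem_Icc.mp hi
    exact key_letter k n hk hn w hw i hi1 hi2
  have hltr_mem : ∀ g ∈ Finset.range (k * n + 1), gapLetter w g ∈ Finset.Icc 1 n := by
    intro g hg
    rw [Finset.mem_range] at hg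
    rw [Finset.mem_Icc]
    unfold gapLetter
    by_cases hxy : bval w g < bval w (g + 1)
    · rw [if_pos hxy]
      have h1 : bval w (g + 1) ≠ 0 := by omega
      have hgN : g + 1 ≤ k * n := by
        by_contra hcon
        exact h1 (hvout _ (by omega))
      exact hvrange (g + 1) (by omega) hgN
    · rw [if_neg hxy]
      push_neg at hxy
      have hg1 : 1 ≤ bval w g := by
        rcases Nat.eq_zero_or_pos (bval w g) with h | h
        · exfalso
          rcases Nat.eq_zero_or_pos g with hg0 | hg0
          · subst hg0
            have h1 := (hvrange 1 le_rfl (by nlinarith)).1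
            rw [hv0] at hxy
            norm_num at hxy
            omega
          · have := (hvrange g hg0 (by omega)).1
            omega
        · exact h
      have hgn : g ≠ 0 := by
        intro h; rw [h, hv0] at hg1; omega
      exact ⟨hg1, (hvrange g (by omega) (by omega)).2⟩
  have hfib : ∑ i ∈ Finset.Icc 1 n,
      ((Finset.range (k * n + 1)).filter (fun g => gapLetter w g = i)).card = k * n + 1 := by
    rw [← Finset.card_eq_sum_card_fiberwise hltr_mem, Finset.card_range]
  have hsum : ∑ i ∈ Finset.Icc 1 n,
      ((∑ h : Fin (k + 1), (if localType k n w i h then 1 else 0))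
        + ((Finset.range (k * n + 1)).filter (fun g => gapLetter w g = i)).card) = n * (k + 1) := by
    rw [Finset.sum_congr rfl key, Finset.sum_const, Nat.card_Icc, smul_eq_mul, Nat.add_sub_cancel]
  rw [Finset.sum_add_distrib, hfib] at hsum
  have hr : n * (k + 1) = k * n + n := by ring
  omega
end
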